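/- arXiv:2006.12401 — 2 statements merged into one kernel-verified Lean document; each statement's English description precedes it below -/
import Mathlib

section
/- For every λ ∈ ℂ with λ ≠ p(x) for all x ∈ [0,π] and λ ≠ p(0), the solution φ(x,λ) of the conformable fractional diffusion equation with φ(0,λ) = 1, D^α φ(0,λ) = h satisfies the integral equation φ(x,λ) = cos(λx^α/α − Q(x)) + (h/(λ − p(0))) sin(λx^α/α − Q(x)) + ∫₀ˣ [sin(λ(x^α − t^α)/α − Q(x) + Q(t)) / (λ − p(t))] · [(q(t) + p²(t)) φ(t,λ) + (D^α p(t)/(λ − p(t))) D^α φ(t,λ)] d_α t for all x ∈ [0,π]. -/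
open Set Filter Topology MeasureTheory intervalIntegral

noncomputable section

/-- Conformable fractional derivative (of order `α`) of a complex-valued function of a
real variable: `D^α f (x) = x^(1-α) f'(x)` (for `x > 0`). -/
def cfDeriv (α : ℝ) (f : ℝ → ℂ) (x : ℝ) : ℂ := ((x ^ (1 - α) : ℝ) : ℂ) * deriv f x

/-- Conformable fractional derivative of a real-valued function. -/
def cfDerivR (α : ℝ) (f : ℝ → ℝ) (x : ℝ) : ℝ := x ^ (1 - α) * deriv f x

/-- Fractional Wronskian `W_α[y,z](x) = y x * D^α z x - z x * D^α y x`. -/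
def cfWronskian (α : ℝ) (y z : ℝ → ℂ) (x : ℝ) : ℂ :=
  y x * cfDeriv α z x - z x * cfDeriv α y x

/-- `f` is absolutely continuous on `[a,b]`: it is the integral of some integrable
function. -/
def AbsContOn (f : ℝ → ℝ) (a b : ℝ) : Prop :=
  ∃ g : ℝ → ℝ, IntervalIntegrable g volume a b ∧
    ∀ x ∈ Set.Icc a b, f x = f a + ∫ t in a..x, g t

/-- Membership in the conformable Sobolev space `W²_α(0,π)`: absolutely continuous on
`[0,π]` with conformable fractional derivative in `L²((0,π), t^(α-1) dt)`. -/
def MemW2 (α : ℝ) (f : ℝ → ℝ) : Prop :=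
  AbsContOn f 0 Real.pi ∧
  IntervalIntegrable (fun t => t ^ (α - 1) * (cfDerivR α f t) ^ 2) volume 0 Real.pi

/-- `Q(x) = ∫₀ˣ p(t) d_α t = ∫₀ˣ t^(α-1) p(t) dt`. -/
def Qfun (α : ℝ) (p : ℝ → ℝ) (x : ℝ) : ℝ := ∫ t in (0:ℝ)..x, t ^ (α - 1) * p t

/-- `y` is a solution of the conformable fractional diffusion equation
`-D^α D^α y + (2 λ p + q) y = λ² y` on `(0,π)`, continuous on `[0,π]` and with `y` and
`D^α y` differentiable up to the right endpoint. -/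
def IsSolution (α : ℝ) (p q : ℝ → ℝ) (lam : ℂ) (y : ℝ → ℂ) : Prop :=
  ContinuousOn y (Set.Icc 0 Real.pi) ∧
  (∀ x ∈ Set.Ioc (0:ℝ) Real.pi, DifferentiableAt ℝ y x) ∧
  (∀ x ∈ Set.Ioc (0:ℝ) Real.pi, DifferentiableAt ℝ (cfDeriv α y) x) ∧
  (∀ x ∈ Set.Ioo (0:ℝ) Real.pi,
    -cfDeriv α (cfDeriv α y) x + (2 * lam * (p x : ℂ) + (q x : ℂ)) * y x = lam ^ 2 * y x)

/-- `y = φ(·,λ)`: the solution of the equation with `φ(0,λ) = 1` and `D^α φ(0,λ) = h`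
(the conformable derivative at `0` being understood as the limit from the right). -/
def IsPhi (α h : ℝ) (p q : ℝ → ℝ) (lam : ℂ) (y : ℝ → ℂ) : Prop :=
  IsSolution α p q lam y ∧ y 0 = 1 ∧
  Tendsto (cfDeriv α y) (nhdsWithin (0:ℝ) (Set.Ioi 0)) (nhds (h : ℂ))

/-- `y = ψ(·,λ)`: the solution of the equation with `ψ(π,λ) = 1`, `D^α ψ(π,λ) = -H`. -/
def IsPsi (α H : ℝ) (p q : ℝ → ℝ) (lam : ℂ) (y : ℝ → ℂ) : Prop :=
  IsSolution α p q lam y ∧ y Real.pi = 1 ∧ cfDeriv α y Real.pi = -(H : ℂ)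


lemma ae_hasDerivAt_primitive {g : ℝ → ℝ} (hg : Integrable g (volume : Measure ℝ)) :
    ∀ᵐ x : ℝ, HasDerivAt (fun y => ∫ t in (0:ℝ)..y, g t) (g x) x := by
  have hvit := (IsUnifLocDoublingMeasure.vitaliFamily (volume : Measure ℝ) 1).ae_tendsto_average
    hg.locallyIntegrable
  filter_upwards [hvit] with x hx
  set P : ℝ → ℝ := fun y => ∫ t in (0:ℝ)..y, g t with hP
  have hslope : ∀ y : ℝ, y ≠ x → slope P x y = (y - x)⁻¹ * ∫ t in x..y, g t := by
    intro y hy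
    have : P y - P x = ∫ t in x..y, g t := by
      rw [hP]
      have h1 : IntervalIntegrable g volume 0 x := hg.intervalIntegrable
      have h2 : IntervalIntegrable g volume x y := hg.intervalIntegrable
      simp only
      rw [← intervalIntegral.integral_add_adjacent_intervals h1 h2]
      abel
    rw [slope_def_field, div_eq_inv_mul, ← this]
  rw [hasDerivAt_iff_tendsto_slope, ← nhdsLT_sup_nhdsGT, tendsto_sup]
  constructor
  · have h1 := hx.comp (Real.tendsto_Icc_vitaliFamily_left x)
    apply h1.congr'
    filter_upwards [self_mem_nhdsWithin] with y (hy : y < x)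
    have hvol : (volume (Icc y x)).toReal = x - y := by
      rw [Real.volume_Icc, ENNReal.toReal_ofReal (by linarith)]
    have : ⨍ t in Icc y x, g t ∂(volume : Measure ℝ) = (x - y)⁻¹ * ∫ t in Icc y x, g t := by
      rw [setAverage_eq, MeasureTheory.measureReal_def, hvol]; simp [smul_eq_mul]
    rw [Function.comp_apply, this, hslope y hy.ne]
    rw [MeasureTheory.integral_Icc_eq_integral_Ioc, ← intervalIntegral.integral_of_le hy.le,
      intervalIntegral.integral_symm]
    rw [show (y - x)⁻¹ = -(x - y)⁻¹ by rw [← neg_sub x y, inv_neg]]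
    ring
  · have h1 := hx.comp (Real.tendsto_Icc_vitaliFamily_right x)
    apply h1.congr'
    filter_upwards [self_mem_nhdsWithin] with y (hy : x < y)
    have hvol : (volume (Icc x y)).toReal = y - x := by
      rw [Real.volume_Icc, ENNReal.toReal_ofReal (by linarith)]
    have : ⨍ t in Icc x y, g t ∂(volume : Measure ℝ) = (y - x)⁻¹ * ∫ t in Icc x y, g t := by
      rw [setAverage_eq, MeasureTheory.measureReal_def, hvol]; simp [smul_eq_mul]
    rw [Function.comp_apply, this, hslope y hy.ne']
    rw [MeasureTheory.integral_Icc_eq_integral_Ioc, ← intervalIntegral.integral_of_le hy.le]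

lemma triangle_integral {a x : ℝ} {m1 m2 : ℝ → ℂ}
    (h1 : IntegrableOn m1 (Ioc a x) volume) (h2 : IntegrableOn m2 (Ioc a x) volume) :
    ((∫ t in Ioc a x, m1 t * ∫ s in Ioc a t, m2 s)
      + ∫ t in Ioc a x, (∫ s in Ioc a t, m1 s) * m2 t)
    = (∫ t in Ioc a x, m1 t) * ∫ t in Ioc a x, m2 t := by
  set μ : Measure ℝ := volume.restrict (Ioc a x) with hμ
  have hIoc : MeasurableSet (Ioc a x) := measurableSet_Ioc
  have hF : Integrable (fun z : ℝ × ℝ => m1 z.1 * m2 z.2) (μ.prod μ) :=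
    Integrable.mul_prod h1 h2
  have hT : MeasurableSet {z : ℝ × ℝ | z.2 ≤ z.1} := measurableSet_le measurable_snd measurable_fst
  have hsplit : (∫ z in {z : ℝ × ℝ | z.2 ≤ z.1}, m1 z.1 * m2 z.2 ∂(μ.prod μ))
      + ∫ z in {z : ℝ × ℝ | z.2 ≤ z.1}ᶜ, m1 z.1 * m2 z.2 ∂(μ.prod μ)
      = ∫ z, m1 z.1 * m2 z.2 ∂(μ.prod μ) :=
    MeasureTheory.integral_add_compl hT hF
  rw [MeasureTheory.integral_prod_mul] at hsplit
  -- first piece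
  have hpiece1 : (∫ z in {z : ℝ × ℝ | z.2 ≤ z.1}, m1 z.1 * m2 z.2 ∂(μ.prod μ))
      = ∫ t in Ioc a x, m1 t * ∫ s in Ioc a t, m2 s := by
    rw [← MeasureTheory.integral_indicator hT, MeasureTheory.integral_prod _ (hF.indicator hT)]
    rw [hμ]
    refine MeasureTheory.setIntegral_congr_fun hIoc (fun t ht => ?_)
    have : (fun s => {z : ℝ × ℝ | z.2 ≤ z.1}.indicator (fun z => m1 z.1 * m2 z.2) (t, s))
        = fun s => (Iic t).indicator (fun s => m1 t * m2 s) s := by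
      funext s
      by_cases hs : s ≤ t
      · rw [Set.indicator_of_mem (by exact hs) , Set.indicator_of_mem (by exact hs)]
      · rw [Set.indicator_of_notMem (by exact hs), Set.indicator_of_notMem (by exact hs)]
    rw [this, MeasureTheory.integral_indicator measurableSet_Iic,
      MeasureTheory.Measure.restrict_restrict measurableSet_Iic,
      show Iic t ∩ Ioc a x = Ioc a t by
        ext s; simp only [mem_inter_iff, mem_Iic, mem_Ioc]
        exact ⟨fun ⟨hst, has, _⟩ => ⟨has, hst⟩, fun ⟨has, hst⟩ => ⟨hst, has, hst.trans ht.2⟩⟩,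
      MeasureTheory.integral_const_mul]
  -- second piece
  have hpiece2 : (∫ z in {z : ℝ × ℝ | z.2 ≤ z.1}ᶜ, m1 z.1 * m2 z.2 ∂(μ.prod μ))
      = ∫ t in Ioc a x, (∫ s in Ioc a t, m1 s) * m2 t := by
    have hTc : MeasurableSet {z : ℝ × ℝ | z.2 ≤ z.1}ᶜ := hT.compl
    rw [← MeasureTheory.integral_indicator hTc,
      MeasureTheory.integral_prod_symm _ (hF.indicator hTc)]
    rw [hμ]
    refine MeasureTheory.setIntegral_congr_fun hIoc (fun s hs => ?_)
    have : (fun t => {z : ℝ × ℝ | z.2 ≤ z.1}ᶜ.indicator (fun z => m1 z.1 * m2 z.2) (t, s))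
        = fun t => (Iio s).indicator (fun t => m1 t * m2 s) t := by
      funext t
      by_cases hts : t < s
      · rw [Set.indicator_of_mem
            (show (t, s) ∈ {z : ℝ × ℝ | z.2 ≤ z.1}ᶜ by
              simp only [mem_compl_iff, mem_setOf_eq, not_le]; exact hts),
          Set.indicator_of_mem (show t ∈ Iio s from hts)]
      · rw [Set.indicator_of_notMem
            (show (t, s) ∉ {z : ℝ × ℝ | z.2 ≤ z.1}ᶜ by
              simp only [mem_compl_iff, mem_setOf_eq, not_le, not_lt]; exact not_lt.1 hts),
          Set.indicator_of_notMem (show t ∉ Iio s from hts)]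
    rw [this, MeasureTheory.integral_indicator measurableSet_Iio,
      MeasureTheory.Measure.restrict_restrict measurableSet_Iio,
      show Iio s ∩ Ioc a x = Ioo a s by
        ext t; simp only [mem_inter_iff, mem_Iio, mem_Ioo, mem_Ioc]
        exact ⟨fun ⟨hts, hat, _⟩ => ⟨hat, hts⟩, fun ⟨hat, hts⟩ => ⟨hts, hat, (hts.le.trans hs.2)⟩⟩,
      MeasureTheory.integral_mul_const, ← MeasureTheory.integral_Ioc_eq_integral_Ioo]
  rw [hpiece1, hpiece2] at hsplit
  exact hsplit

/-- Product rule for functions given as integrals of integrable densities. -/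
lemma acMul {a b : ℝ} (hab : a ≤ b) {w1 w2 m1 m2 : ℝ → ℂ}
    (h1 : IntervalIntegrable m1 volume a b) (h2 : IntervalIntegrable m2 volume a b)
    (hw1 : ∀ y ∈ Icc a b, w1 y = w1 a + ∫ t in a..y, m1 t)
    (hw2 : ∀ y ∈ Icc a b, w2 y = w2 a + ∫ t in a..y, m2 t) :
    ∀ y ∈ Icc a b, w1 y * w2 y = w1 a * w2 a + ∫ t in a..y, (m1 t * w2 t + w1 t * m2 t) := by
  intro y hy
  have hay : a ≤ y := hy.1
  have h1y : IntervalIntegrable m1 volume a y :=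
    h1.mono_set (by rw [uIcc_of_le hay, uIcc_of_le hab]; exact Icc_subset_Icc le_rfl hy.2)
  have h2y : IntervalIntegrable m2 volume a y :=
    h2.mono_set (by rw [uIcc_of_le hay, uIcc_of_le hab]; exact Icc_subset_Icc le_rfl hy.2)
  have key : (∫ t in a..y, (m1 t * w2 t + w1 t * m2 t))
      = (∫ t in a..y, (m1 t * (w2 a + ∫ s in a..t, m2 s)
          + (w1 a + ∫ s in a..t, m1 s) * m2 t)) := by
    refine intervalIntegral.integral_congr (fun t ht => ?_)
    rw [uIcc_of_le hay] at ht
    have ht' : t ∈ Icc a b := ⟨ht.1, ht.2.trans hy.2⟩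
    rw [hw1 t ht', hw2 t ht']
  rw [key]
  have hM1 : ContinuousOn (fun t => ∫ s in a..t, m1 s) (Icc a y) := by
    have := intervalIntegral.continuousOn_primitive_interval' h1y (by
      rw [uIcc_of_le hay]; exact ⟨le_rfl, hay⟩)
    rwa [uIcc_of_le hay] at this
  have hM2 : ContinuousOn (fun t => ∫ s in a..t, m2 s) (Icc a y) := by
    have := intervalIntegral.continuousOn_primitive_interval' h2y (by
      rw [uIcc_of_le hay]; exact ⟨le_rfl, hay⟩)
    rwa [uIcc_of_le hay] at this
  have hi1 : IntervalIntegrable (fun t => m1 t * (w2 a + ∫ s in a..t, m2 s)) volume a y :=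
    h1y.mul_continuousOn (by rw [uIcc_of_le hay]; exact continuousOn_const.add hM2)
  have hi2 : IntervalIntegrable (fun t => (w1 a + ∫ s in a..t, m1 s) * m2 t) volume a y := by
    have := h2y.continuousOn_mul (g := fun t => w1 a + ∫ s in a..t, m1 s)
      (by rw [uIcc_of_le hay]; exact continuousOn_const.add hM1)
    exact this
  rw [intervalIntegral.integral_add hi1 hi2]
  have expand1 : (∫ t in a..y, m1 t * (w2 a + ∫ s in a..t, m2 s))
      = w2 a * (∫ t in a..y, m1 t) + ∫ t in a..y, m1 t * ∫ s in a..t, m2 s := by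
    have e1 : IntervalIntegrable (fun t => m1 t * w2 a) volume a y :=
      h1y.mul_continuousOn continuousOn_const
    have e2 : IntervalIntegrable (fun t => m1 t * ∫ s in a..t, m2 s) volume a y :=
      h1y.mul_continuousOn (by rw [uIcc_of_le hay]; exact hM2)
    rw [show (fun t => m1 t * (w2 a + ∫ s in a..t, m2 s))
        = fun t => m1 t * w2 a + m1 t * ∫ s in a..t, m2 s by funext t; ring]
    rw [intervalIntegral.integral_add e1 e2, intervalIntegral.integral_mul_const]
    ring
  have expand2 : (∫ t in a..y, (w1 a + ∫ s in a..t, m1 s) * m2 t)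
      = w1 a * (∫ t in a..y, m2 t) + ∫ t in a..y, (∫ s in a..t, m1 s) * m2 t := by
    have e1 : IntervalIntegrable (fun t => w1 a * m2 t) volume a y :=
      h2y.continuousOn_mul continuousOn_const
    have e2 : IntervalIntegrable (fun t => (∫ s in a..t, m1 s) * m2 t) volume a y :=
      h2y.continuousOn_mul (by rw [uIcc_of_le hay]; exact hM1)
    rw [show (fun t => (w1 a + ∫ s in a..t, m1 s) * m2 t)
        = fun t => w1 a * m2 t + (∫ s in a..t, m1 s) * m2 t by funext t; ring]
    rw [intervalIntegral.integral_add e1 e2, intervalIntegral.integral_const_mul]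
  have htri : ((∫ t in a..y, m1 t * ∫ s in a..t, m2 s)
        + ∫ t in a..y, (∫ s in a..t, m1 s) * m2 t)
      = (∫ t in a..y, m1 t) * ∫ t in a..y, m2 t := by
    have conv : ∀ (f : ℝ → ℂ), (∫ t in a..y, f t) = ∫ t in Ioc a y, f t := fun f =>
      intervalIntegral.integral_of_le hay
    rw [conv (fun t => m1 t * ∫ s in a..t, m2 s),
      conv (fun t => (∫ s in a..t, m1 s) * m2 t), conv m1, conv m2]
    have c1 : ∀ t ∈ Ioc a y, (m1 t * ∫ s in a..t, m2 s) = m1 t * ∫ s in Ioc a t, m2 s := by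
      intro t ht; rw [intervalIntegral.integral_of_le ht.1.le]
    have c2 : ∀ t ∈ Ioc a y, ((∫ s in a..t, m1 s) * m2 t) = (∫ s in Ioc a t, m1 s) * m2 t := by
      intro t ht; rw [intervalIntegral.integral_of_le ht.1.le]
    rw [MeasureTheory.setIntegral_congr_fun measurableSet_Ioc c1,
      MeasureTheory.setIntegral_congr_fun measurableSet_Ioc c2]
    exact triangle_integral ((intervalIntegrable_iff_integrableOn_Ioc_of_le hay).1 h1y)
      ((intervalIntegrable_iff_integrableOn_Ioc_of_le hay).1 h2y)
  rw [expand1, expand2, hw1 y hy, hw2 y hy]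
  rw [show (w2 a * ∫ t in a..y, m1 t) + (∫ t in a..y, m1 t * ∫ s in a..t, m2 s)
       + ((w1 a * ∫ t in a..y, m2 t) + ∫ t in a..y, (∫ s in a..t, m1 s) * m2 t)
      = (w2 a * ∫ t in a..y, m1 t) + (w1 a * ∫ t in a..y, m2 t)
        + (((∫ t in a..y, m1 t * ∫ s in a..t, m2 s))
          + ∫ t in a..y, (∫ s in a..t, m1 s) * m2 t) by ring, htri]
  ring

/-- A continuously-差identifiable function is an integral of its derivative. -/
lemma acOfDeriv {a b : ℝ} (hab : a ≤ b) {v v' : ℝ → ℂ}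
    (hcont : ContinuousOn v (Icc a b))
    (hderiv : ∀ t ∈ Ioo a b, HasDerivAt v (v' t) t)
    (hint : IntervalIntegrable v' volume a b) :
    ∀ y ∈ Icc a b, v y = v a + ∫ t in a..y, v' t := by
  intro y hy
  have : (∫ t in a..y, v' t) = v y - v a := by
    refine intervalIntegral.integral_eq_sub_of_hasDerivAt_of_le hy.1
      (hcont.mono (Icc_subset_Icc le_rfl hy.2))
      (fun t ht => hderiv t ⟨ht.1, ht.2.trans_le hy.2⟩)
      (hint.mono_set (by rw [uIcc_of_le hy.1, uIcc_of_le hab]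
                         exact Icc_subset_Icc le_rfl hy.2))
  rw [this]; ring

/-- Grönwall-type lemma: a nonnegative continuous function dominated by `K` times the integral
of itself against a nonnegative integrable weight vanishes. -/
lemma gronwall_zero {a b : ℝ} (hab : a ≤ b) {e gA : ℝ → ℝ} {K : ℝ} (hK : 0 ≤ K)
    (hgA : IntervalIntegrable gA volume a b) (hgA0 : ∀ t, 0 ≤ gA t)
    (hecont : ContinuousOn e (Icc a b)) (he0 : ∀ t, 0 ≤ e t) (hea : e a = 0)
    (key : ∀ y ∈ Icc a b, e y ≤ K * ∫ t in a..y, gA t * e t) :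
    ∀ y ∈ Icc a b, e y = 0 := by
  have hsub : ∀ {c d : ℝ}, a ≤ c → d ≤ b → c ≤ d → ∀ {f : ℝ → ℝ},
      IntervalIntegrable f volume a b → IntervalIntegrable f volume c d := by
    intro c d hc hd hcd f hf
    exact hf.mono_set (by rw [uIcc_of_le hcd, uIcc_of_le hab]; exact Icc_subset_Icc hc hd)
  have hgAe : IntervalIntegrable (fun t => gA t * e t) volume a b :=
    hgA.mul_continuousOn (by rw [uIcc_of_le hab]; exact hecont)
  set S : Set ℝ := {y | y ∈ Icc a b ∧ ∀ s ∈ Icc a y, e s = 0} with hS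
  have haS : a ∈ S := ⟨⟨le_rfl, hab⟩, fun s hs => by
    rw [show s = a from le_antisymm hs.2 hs.1]; exact hea⟩
  have hSne : S.Nonempty := ⟨a, haS⟩
  have hSbdd : BddAbove S := ⟨b, fun y hy => hy.1.2⟩
  set c : ℝ := sSup S with hc
  have hac : a ≤ c := le_csSup hSbdd haS
  have hcb : c ≤ b := csSup_le hSne fun y hy => hy.1.2
  have hzero_lt : ∀ s ∈ Ico a c, e s = 0 := by
    intro s hs
    obtain ⟨y, hyS, hsy⟩ := exists_lt_of_lt_csSup hSne hs.2
    exact hyS.2 s ⟨hs.1, hsy.le⟩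
  have hec : e c = 0 := by
    rcases eq_or_lt_of_le hac with h' | h'
    · rw [← h']; exact hea
    · have hne : (𝓝[Ico a c] c).NeBot := by
        refine mem_closure_iff_nhdsWithin_neBot.1 ?_
        rw [closure_Ico h'.ne]
        exact ⟨h'.le, le_rfl⟩
      have h1 : Tendsto e (𝓝[Ico a c] c) (𝓝 (e c)) :=
        (hecont.continuousWithinAt ⟨hac, hcb⟩).mono_left
          (nhdsWithin_mono c (fun t ht => ⟨ht.1, ht.2.le.trans hcb⟩))
      have h2 : Tendsto e (𝓝[Ico a c] c) (𝓝 0) := by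
        refine tendsto_const_nhds.congr' ?_
        filter_upwards [self_mem_nhdsWithin] with t ht
        exact (hzero_lt t ht).symm
      exact tendsto_nhds_unique h1 h2
  have hzero_le : ∀ s ∈ Icc a c, e s = 0 := by
    intro s hs
    rcases lt_or_eq_of_le hs.2 with h | h
    · exact hzero_lt s ⟨hs.1, h⟩
    · rw [h]; exact hec
  have hcbeq : c = b := by
    by_contra hlt
    have hclt : c < b := lt_of_le_of_ne hcb hlt
    have hprim : ContinuousWithinAt (fun y => K * ∫ t in c..y, gA t) (Icc c b) c := by
      have := intervalIntegral.continuousOn_primitive_interval'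
        (hsub hac le_rfl hcb hgA) (by rw [uIcc_of_le hcb]; exact ⟨le_rfl, hcb⟩)
      rw [uIcc_of_le hcb] at this
      exact (continuousOn_const.mul this).continuousWithinAt ⟨le_rfl, hcb⟩
    have h0 : K * (∫ t in c..c, gA t) < 1/2 := by
      rw [intervalIntegral.integral_same]; norm_num
    have hev : ∀ᶠ y in 𝓝[Icc c b] c, (K * ∫ t in c..y, gA t) < 1/2 :=
      hprim (Iio_mem_nhds h0)
    have hfle : 𝓝[Ioc c b] c ≤ 𝓝[Icc c b] c := nhdsWithin_mono c Ioc_subset_Icc_self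
    have hneIoc : (𝓝[Ioc c b] c).NeBot := by
      have h1 : Iic b ∈ 𝓝[Ioi c] c := nhdsWithin_le_nhds (Iic_mem_nhds hclt)
      have h2 : 𝓝[Ioc c b] c = 𝓝[>] c := by
        rw [show Ioc c b = Ioi c ∩ Iic b from rfl, nhdsWithin_inter_of_mem' h1]
      rw [h2]; infer_instance
    have hev2 : ∀ᶠ y in 𝓝[Ioc c b] c, (K * ∫ t in c..y, gA t) < 1/2 := hev.filter_mono hfle
    have hev3 : ∀ᶠ y in 𝓝[Ioc c b] c, (K * ∫ t in c..y, gA t) < 1/2 ∧ y ∈ Ioc c b :=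
      hev2.and eventually_mem_nhdsWithin
    obtain ⟨d, hdK, hdIoc⟩ := hev3.exists
    have hcd : c ≤ d := hdIoc.1.le
    have hdb : d ≤ b := hdIoc.2
    obtain ⟨s₀, hs₀, hmax⟩ := isCompact_Icc.exists_isMaxOn (nonempty_Icc.2 hcd)
      (hecont.mono (Icc_subset_Icc hac hdb))
    set M := e s₀ with hM
    have hM0 : 0 ≤ M := he0 s₀
    have hgAnn : 0 ≤ ∫ t in c..d, gA t :=
      intervalIntegral.integral_nonneg hcd fun t _ => hgA0 t
    have hbound : ∀ y ∈ Icc c d, e y ≤ M * (1/2) := by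
      intro y hy
      have hcy : c ≤ y := hy.1
      have hyd : y ≤ d := hy.2
      have hya : a ≤ y := hac.trans hcy
      have hyb : y ≤ b := hyd.trans hdb
      have hyab : y ∈ Icc a b := ⟨hya, hyb⟩
      have i1 : IntervalIntegrable (fun t => gA t * e t) volume a c := hsub le_rfl hcb hac hgAe
      have i2 : IntervalIntegrable (fun t => gA t * e t) volume c y :=
        hsub hac hyb hcy hgAe
      have h1 : (∫ t in a..y, gA t * e t)
          = (∫ t in a..c, gA t * e t) + ∫ t in c..y, gA t * e t :=
        (intervalIntegral.integral_add_adjacent_intervals i1 i2).symm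
      have hzero1 : (∫ t in a..c, gA t * e t) = 0 := by
        rw [intervalIntegral.integral_congr (g := fun _ => (0:ℝ))
          (fun t ht => by
            rw [uIcc_of_le hac] at ht
            rw [hzero_le t ht, mul_zero]),
          intervalIntegral.integral_zero]
      have h2 : (∫ t in c..y, gA t * e t) ≤ ∫ t in c..y, gA t * M := by
        refine intervalIntegral.integral_mono_on hcy i2
          ((hsub hac hyb hcy hgA).mul_const M) (fun t ht => ?_)
        exact mul_le_mul_of_nonneg_left (hmax ⟨ht.1, ht.2.trans hyd⟩) (hgA0 t)
      have h3 : (∫ t in c..y, gA t * M) = (∫ t in c..y, gA t) * M :=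
        intervalIntegral.integral_mul_const M gA
      have h4 : (∫ t in c..y, gA t) ≤ ∫ t in c..d, gA t := by
        rw [← intervalIntegral.integral_add_adjacent_intervals
          (hsub hac hyb hcy hgA) (hsub hya hdb hyd hgA)]
        exact le_add_of_nonneg_right
          (intervalIntegral.integral_nonneg hyd fun t _ => hgA0 t)
      calc e y ≤ K * ∫ t in a..y, gA t * e t := key y hyab
        _ = K * ∫ t in c..y, gA t * e t := by rw [h1, hzero1, zero_add]
        _ ≤ K * ((∫ t in c..y, gA t) * M) := by
            refine mul_le_mul_of_nonneg_left ?_ hK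
            rw [← h3]; exact h2
        _ ≤ K * ((∫ t in c..d, gA t) * M) := by
            refine mul_le_mul_of_nonneg_left (mul_le_mul_of_nonneg_right h4 hM0) hK
        _ = (K * ∫ t in c..d, gA t) * M := by ring
        _ ≤ (1/2) * M := mul_le_mul_of_nonneg_right hdK.le hM0
        _ = M * (1/2) := by ring
    have hMzero : M = 0 := by
      have := hbound s₀ hs₀
      linarith
    have hzero_cd : ∀ s ∈ Icc c d, e s = 0 := by
      intro s hs
      have h1 : e s ≤ 0 := by
        have := hbound s hs; rw [hMzero] at this; linarith
      linarith [he0 s]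
    have hdS : d ∈ S := by
      refine ⟨⟨hac.trans hcd, hdb⟩, fun s hs => ?_⟩
      rcases le_or_gt s c with h | h
      · exact hzero_le s ⟨hs.1, h⟩
      · exact hzero_cd s ⟨h.le, hs.2⟩
    exact absurd (le_csSup hSbdd hdS) (not_le.2 hdIoc.1)
  intro y hy
  exact hzero_le y ⟨hy.1, hy.2.trans_eq hcbeq.symm⟩

lemma IntervalIntegrable.ofReal' {a b : ℝ} {f : ℝ → ℝ} (h : IntervalIntegrable f volume a b) :
    IntervalIntegrable (fun x => (f x : ℂ)) volume a b :=
  ⟨h.1.ofReal, h.2.ofReal⟩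

/-- Continuity of an AC-representative. -/
lemma acCont {a b : ℝ} (hab : a ≤ b) {w m : ℝ → ℂ}
    (hm : IntervalIntegrable m volume a b)
    (hw : ∀ y ∈ Icc a b, w y = w a + ∫ t in a..y, m t) :
    ContinuousOn w (Icc a b) := by
  have h1 : ContinuousOn (fun y => w a + ∫ t in a..y, m t) (Icc a b) := by
    have := intervalIntegral.continuousOn_primitive_interval' hm (by
      rw [uIcc_of_le hab]; exact ⟨le_rfl, hab⟩)
    rw [uIcc_of_le hab] at this
    exact continuousOn_const.add this
  exact h1.congr hw

lemma acContR {a b : ℝ} (hab : a ≤ b) {w m : ℝ → ℝ}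
    (hm : IntervalIntegrable m volume a b)
    (hw : ∀ y ∈ Icc a b, w y = w a + ∫ t in a..y, m t) :
    ContinuousOn w (Icc a b) := by
  have h1 : ContinuousOn (fun y => w a + ∫ t in a..y, m t) (Icc a b) := by
    have := intervalIntegral.continuousOn_primitive_interval' hm (by
      rw [uIcc_of_le hab]; exact ⟨le_rfl, hab⟩)
    rw [uIcc_of_le hab] at this
    exact continuousOn_const.add this
  exact h1.congr hw

/-- `t ↦ (lam - p t)⁻¹` is an AC-representative with density `g (lam-p)⁻²`. -/
lemma recipRep {a b : ℝ} (hab : a ≤ b) {g pf : ℝ → ℝ} {lam : ℂ}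
    (hg : IntervalIntegrable g volume a b)
    (hrep : ∀ y ∈ Icc a b, pf y = pf a + ∫ t in a..y, g t)
    (hne : ∀ y ∈ Icc a b, lam - (pf y : ℂ) ≠ 0) :
    ∀ y ∈ Icc a b,
      (lam - (pf y : ℂ))⁻¹ = (lam - (pf a : ℂ))⁻¹
        + ∫ t in a..y, (g t : ℂ) * ((lam - (pf t : ℂ))⁻¹) ^ 2 := by
  set Bc : ℝ → ℂ := fun t => lam - (pf t : ℂ) with hBc
  set u : ℝ → ℂ := fun t => (Bc t)⁻¹ with hu
  have hpfc : ContinuousOn pf (Icc a b) := acContR hab hg hrep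
  have hBcont : ContinuousOn Bc (Icc a b) :=
    continuousOn_const.sub (Complex.continuous_ofReal.comp_continuousOn hpfc)
  have hucont : ContinuousOn u (Icc a b) := hBcont.inv₀ hne
  -- lower bound for ‖Bc‖
  obtain ⟨t0, ht0, hmin⟩ := isCompact_Icc.exists_isMinOn (nonempty_Icc.2 hab)
    (continuous_norm.comp_continuousOn hBcont)
  set δ : ℝ := ‖Bc t0‖ with hδ
  have hδpos : 0 < δ := norm_pos_iff.2 (hne t0 ht0)
  have hδle : ∀ y ∈ Icc a b, δ ≤ ‖Bc y‖ := fun y hy => hmin hy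
  -- candidate density and function
  set m : ℝ → ℂ := fun t => (g t : ℂ) * (u t) ^ 2 with hm
  have hgc : IntervalIntegrable (fun t => (g t : ℂ)) volume a b := hg.ofReal'
  have hmint : IntervalIntegrable m volume a b :=
    hgc.mul_continuousOn (by rw [uIcc_of_le hab]; exact (hucont.pow 2))
  set W : ℝ → ℂ := fun y => u a + ∫ t in a..y, m t with hW
  have hWrep : ∀ y ∈ Icc a b, W y = W a + ∫ t in a..y, m t := by
    intro y hy
    show u a + _ = (u a + ∫ t in a..a, m t) + _
    rw [intervalIntegral.integral_same, add_zero]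
  have hBrep : ∀ y ∈ Icc a b, Bc y = Bc a + ∫ t in a..y, -((g t : ℝ) : ℂ) := by
    intro y hy
    have h1 : (∫ t in a..y, -((g t : ℝ) : ℂ)) = -(((∫ t in a..y, g t) : ℝ) : ℂ) := by
      rw [intervalIntegral.integral_neg, intervalIntegral.integral_ofReal]
    rw [h1, hBc]
    simp only
    rw [hrep y hy]
    push_cast
    ring
  have hBint : IntervalIntegrable (fun t => -((g t : ℝ) : ℂ)) volume a b := hgc.neg
  have hWB := acMul hab hmint hBint hWrep hBrep
  have hWa : W a = u a := by rw [hW]; simp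
  set e : ℝ → ℂ := fun t => u t - W t with he
  have hWcont : ContinuousOn W (Icc a b) := acCont hab hmint hWrep
  have hecont : ContinuousOn e (Icc a b) := hucont.sub hWcont
  have hea : e a = 0 := by rw [he]; simp [hWa]
  have huB : ∀ y ∈ Icc a b, u y * Bc y = 1 := fun y hy => inv_mul_cancel₀ (hne y hy)
  have keyE : ∀ y ∈ Icc a b, e y * Bc y = - ∫ t in a..y, (g t : ℂ) * e t := by
    intro y hy
    have h1 := hWB y hy
    have h2 : W a * Bc a = 1 := by rw [hWa]; exact huB a ⟨le_rfl, hab⟩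
    have h3 : ∀ t ∈ Set.uIcc a y, (m t * Bc t + W t * (-((g t : ℝ) : ℂ)))
        = (g t : ℂ) * e t := by
      intro t ht
      rw [uIcc_of_le hy.1] at ht
      have htab : t ∈ Icc a b := ⟨ht.1, ht.2.trans hy.2⟩
      have hm1 : m t * Bc t = (g t : ℂ) * u t := by
        rw [hm]
        simp only
        rw [pow_two, mul_assoc, mul_assoc, huB t htab, mul_one]
      rw [hm1, he]
      ring
    rw [intervalIntegral.integral_congr h3, h2] at h1
    have h4 := huB y hy
    rw [he]
    simp only [sub_mul, h4, h1]
    ring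
  have key2 : ∀ y ∈ Icc a b, ‖e y‖ ≤ δ⁻¹ * ∫ t in a..y, |g t| * ‖e t‖ := by
    intro y hy
    have h1 := keyE y hy
    have h2 : δ * ‖e y‖ ≤ ‖e y * Bc y‖ := by
      calc δ * ‖e y‖ ≤ ‖Bc y‖ * ‖e y‖ :=
            mul_le_mul_of_nonneg_right (hδle y hy) (norm_nonneg _)
        _ = ‖e y * Bc y‖ := by rw [norm_mul]; ring
    have h3 : ‖e y * Bc y‖ ≤ ∫ t in a..y, |g t| * ‖e t‖ := by
      rw [h1, norm_neg]
      refine le_trans (intervalIntegral.norm_integral_le_integral_norm hy.1) ?_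
      refine le_of_eq (intervalIntegral.integral_congr fun t ht => ?_)
      rw [norm_mul, Complex.norm_real, Real.norm_eq_abs]
    calc ‖e y‖ = δ⁻¹ * (δ * ‖e y‖) := by field_simp
      _ ≤ δ⁻¹ * ∫ t in a..y, |g t| * ‖e t‖ :=
          mul_le_mul_of_nonneg_left (h2.trans h3) (inv_nonneg.2 hδpos.le)
  have hzero := gronwall_zero hab (inv_nonneg.2 hδpos.le) hg.abs (fun t => abs_nonneg _)
    hecont.norm (fun t => norm_nonneg _) (by rw [hea, norm_zero]) key2
  intro y hy
  have : e y = 0 := norm_eq_zero.1 (hzero y hy)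
  have huW : u y = W y := sub_eq_zero.1 this
  rw [show (lam - (pf y : ℂ))⁻¹ = u y from rfl, huW, hW]

lemma alg_helper (t' s' S Bv QP pv psv gv : ℂ) (hts : t' * s' = 1) :
    t' * (S / Bv * (QP * pv + s' * gv / Bv * psv))
      = t' * (S * Bv⁻¹ * QP * pv) + gv * (S * (Bv⁻¹) ^ 2 * psv) := by
  calc t' * (S / Bv * (QP * pv + s' * gv / Bv * psv))
      = t' * (S * Bv⁻¹ * QP * pv) + (t' * s') * (gv * (S * (Bv⁻¹) ^ 2 * psv)) := by
        rw [div_eq_mul_inv, div_eq_mul_inv]; ring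
    _ = t' * (S * Bv⁻¹ * QP * pv) + gv * (S * (Bv⁻¹) ^ 2 * psv) := by rw [hts, one_mul]

lemma HasDerivAt.csinR {f : ℝ → ℂ} {f' : ℂ} {t : ℝ} (hf : HasDerivAt f f' t) :
    HasDerivAt (fun s => Complex.sin (f s)) (Complex.cos (f t) * f') t := by
  simpa [Function.comp_def, smul_eq_mul, mul_comm] using
    (Complex.hasDerivAt_sin (f t)).scomp t hf

lemma HasDerivAt.ccosR {f : ℝ → ℂ} {f' : ℂ} {t : ℝ} (hf : HasDerivAt f f' t) :
    HasDerivAt (fun s => Complex.cos (f s)) (-Complex.sin (f t) * f') t := by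
  simpa [Function.comp_def, smul_eq_mul, mul_comm] using
    (Complex.hasDerivAt_cos (f t)).scomp t hf

/-- For `λ` with `λ ≠ p(x)` on `[0,π]` and `λ ≠ p(0)`, the solution
`φ(·,λ)` satisfies, for all `x ∈ [0,π]`, the integral equation
`φ(x,λ) = cos(λx^α/α - Q(x)) + (h/(λ-p(0))) sin(λx^α/α - Q(x))
 + ∫₀ˣ [sin(λ(x^α-t^α)/α - Q(x)+Q(t))/(λ-p(t))]
        [(q+p²)(t) φ(t,λ) + (D^α p(t)/(λ-p(t))) D^α φ(t,λ)] d_α t`. -/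
theorem phi_integral_equation (α : ℝ) (hα0 : 0 < α) (hα1 : α ≤ 1)
    (h : ℝ) (p q : ℝ → ℝ)
    (hp : MemW2 α p) (hp' : MemW2 α (cfDerivR α p)) (hq : MemW2 α q)
    (lam : ℂ) (hlam : ∀ x ∈ Set.Icc (0:ℝ) Real.pi, lam ≠ (p x : ℂ))
    (hlam0 : lam ≠ (p 0 : ℂ))
    (phi : ℝ → ℂ) (hphi : IsPhi α h p q lam phi) :
    ∀ x ∈ Set.Icc (0:ℝ) Real.pi,
      phi x =
        Complex.cos (lam * ((x ^ α : ℝ) : ℂ) / (α : ℂ) - ((Qfun α p x : ℝ) : ℂ))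
        + ((h : ℂ) / (lam - (p 0 : ℂ)))
            * Complex.sin (lam * ((x ^ α : ℝ) : ℂ) / (α : ℂ) - ((Qfun α p x : ℝ) : ℂ))
        + ∫ t in (0:ℝ)..x,
            ((t ^ (α - 1) : ℝ) : ℂ) *
              (Complex.sin (lam * ((x ^ α - t ^ α : ℝ) : ℂ) / (α : ℂ)
                    - ((Qfun α p x : ℝ) : ℂ) + ((Qfun α p t : ℝ) : ℂ))
                  / (lam - (p t : ℂ))
                * (((q t + p t ^ 2 : ℝ) : ℂ) * phi t
                    + ((cfDerivR α p t : ℝ) : ℂ) / (lam - (p t : ℂ)) * cfDeriv α phi t)) := by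
  obtain ⟨⟨hphicont, hphidiff, hpsidiff, hode⟩, hphi0, hpsilim⟩ := hphi
  obtain ⟨g, hgint, hgrep⟩ := hp.1
  have hπ : (0:ℝ) < Real.pi := Real.pi_pos
  have h0π : (0:ℝ) ≤ Real.pi := hπ.le
  have hαne : (α:ℂ) ≠ 0 := Complex.ofReal_ne_zero.2 hα0.ne'
  -- basic continuity
  have hpcont : ContinuousOn p (Icc 0 Real.pi) := acContR h0π hgint hgrep
  have hqcont : ContinuousOn q (Icc 0 Real.pi) := by
    obtain ⟨gq, hgq, hgqrep⟩ := hq.1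
    exact acContR h0π hgq hgqrep
  have hrpow_int : IntervalIntegrable (fun t : ℝ => t ^ (α - 1)) volume 0 Real.pi :=
    intervalIntegral.intervalIntegrable_rpow' (by linarith)
  -- B and u
  set B : ℝ → ℂ := fun t => lam - (p t : ℂ) with hB
  set u : ℝ → ℂ := fun t => (B t)⁻¹ with hu
  have hBne : ∀ t ∈ Icc (0:ℝ) Real.pi, B t ≠ 0 := fun t ht => sub_ne_zero.2 (hlam t ht)
  have hBcont : ContinuousOn B (Icc 0 Real.pi) :=
    continuousOn_const.sub (Complex.continuous_ofReal.comp_continuousOn hpcont)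
  have hucont : ContinuousOn u (Icc 0 Real.pi) := hBcont.inv₀ hBne
  have huB : ∀ t ∈ Icc (0:ℝ) Real.pi, u t * B t = 1 := fun t ht => inv_mul_cancel₀ (hBne t ht)
  have hurep := recipRep h0π hgint hgrep hBne
  have hgc : IntervalIntegrable (fun t => (g t : ℂ)) volume 0 Real.pi := hgint.ofReal'
  -- μ-density for u
  set mu : ℝ → ℂ := fun t => (g t : ℂ) * (u t) ^ 2 with hmu
  have hmuint : IntervalIntegrable mu volume 0 Real.pi :=
    hgc.mul_continuousOn (by rw [uIcc_of_le h0π]; exact hucont.pow 2)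
  -- Q facts
  have hQw_cont : ContinuousOn (fun t : ℝ => t ^ (α - 1) * p t) (Ioo 0 Real.pi) := by
    intro t ht
    exact (((Real.continuousAt_rpow_const t (α-1) (Or.inl ht.1.ne')).continuousWithinAt).mul
      ((hpcont t ⟨ht.1.le, ht.2.le⟩).mono Ioo_subset_Icc_self))
  have hQint : IntervalIntegrable (fun t : ℝ => t ^ (α - 1) * p t) volume 0 Real.pi :=
    hrpow_int.mul_continuousOn (by rw [uIcc_of_le h0π]; exact hpcont)
  have hQsub : ∀ {y : ℝ}, y ∈ Icc (0:ℝ) Real.pi →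
      IntervalIntegrable (fun t : ℝ => t ^ (α - 1) * p t) volume 0 y := by
    intro y hy
    exact hQint.mono_set (by rw [uIcc_of_le hy.1, uIcc_of_le h0π]
                             exact Icc_subset_Icc le_rfl hy.2)
  have hQcont : ContinuousOn (Qfun α p) (Icc 0 Real.pi) := by
    have := intervalIntegral.continuousOn_primitive_interval' hQint
      (by rw [uIcc_of_le h0π]; exact ⟨le_rfl, h0π⟩)
    rw [uIcc_of_le h0π] at this
    exact this
  have hQderiv : ∀ t ∈ Ioo (0:ℝ) Real.pi, HasDerivAt (Qfun α p) (t ^ (α - 1) * p t) t := by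
    intro t ht
    exact intervalIntegral.integral_hasDerivAt_right (hQsub ⟨ht.1.le, ht.2.le⟩)
      (hQw_cont.stronglyMeasurableAtFilter isOpen_Ioo t ht)
      (hQw_cont.continuousAt (isOpen_Ioo.mem_nhds ht))
  -- ψ and its continuous extension Ψ
  set ψ : ℝ → ℂ := cfDeriv α phi with hψ
  set Ψ : ℝ → ℂ := fun t => if t = 0 then (h:ℂ) else ψ t with hΨ
  have hΨeq : ∀ t : ℝ, t ≠ 0 → Ψ t = ψ t := fun t ht => if_neg ht
  have hψcontAt : ∀ t ∈ Ioc (0:ℝ) Real.pi, ContinuousAt ψ t := fun t ht =>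
    (hpsidiff t ht).continuousAt
  have hΨcont : ContinuousOn Ψ (Icc 0 Real.pi) := by
    intro t ht
    rcases eq_or_lt_of_le ht.1 with h0 | h0
    · -- t = 0
      rw [← h0]
      have hins : Icc (0:ℝ) Real.pi = insert 0 (Ioc 0 Real.pi) := by
        rw [← Ioc_insert_left h0π]
      rw [ContinuousWithinAt, hins, nhdsWithin_insert, tendsto_sup]
      constructor
      · simpa [hΨ] using tendsto_pure_nhds Ψ 0
      · have h1 : Tendsto ψ (𝓝[Ioc (0:ℝ) Real.pi] 0) (𝓝 (h:ℂ)) :=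
          hpsilim.mono_left (nhdsWithin_mono _ (fun s hs => hs.1))
        have h2 : Ψ =ᶠ[𝓝[Ioc (0:ℝ) Real.pi] 0] ψ := by
          filter_upwards [self_mem_nhdsWithin] with s hs
          exact hΨeq s hs.1.ne'
        rw [show Ψ 0 = (h:ℂ) by simp [hΨ]]
        exact h1.congr' h2.symm
    · -- t > 0
      have h1 : ContinuousAt Ψ t := by
        have he : Ψ =ᶠ[𝓝 t] ψ := by
          filter_upwards [Ioi_mem_nhds h0] with s hs
          exact hΨeq s (ne_of_gt hs)
        exact ((hψcontAt t ⟨h0, ht.2⟩).congr he.symm)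
      exact h1.continuousWithinAt
  -- derivative formulas
  have hττ : ∀ t : ℝ, 0 < t → ((t ^ (α - 1) : ℝ) : ℂ) * ((t ^ (1 - α) : ℝ) : ℂ) = 1 := by
    intro t ht
    rw [← Complex.ofReal_mul, ← Real.rpow_add ht]
    norm_num
  set dψ : ℝ → ℂ := fun t =>
    ((t ^ (α - 1) : ℝ) : ℂ) * ((2 * lam * (p t : ℂ) + (q t : ℂ) - lam ^ 2) * phi t) with hdψ
  set dφ : ℝ → ℂ := fun t => ((t ^ (α - 1) : ℝ) : ℂ) * ψ t with hdφ
  have hψderiv : ∀ t ∈ Ioo (0:ℝ) Real.pi, HasDerivAt ψ (dψ t) t := by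
    intro t ht
    have h1 := (hpsidiff t ⟨ht.1, ht.2.le⟩).hasDerivAt
    have h2 : cfDeriv α ψ t = (2 * lam * (p t : ℂ) + (q t : ℂ)) * phi t - lam ^ 2 * phi t := by
      have := hode t ht
      linear_combination -this
    have h3 : deriv ψ t = dψ t := by
      have h4 : ((t ^ (α-1):ℝ):ℂ) * cfDeriv α ψ t = deriv ψ t := by
        rw [show cfDeriv α ψ t = ((t ^ (1-α):ℝ):ℂ) * deriv ψ t from rfl, ← mul_assoc,
          hττ t ht.1, one_mul]
      rw [← h4, h2, hdψ]
      ring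
    rwa [h3] at h1
  have hφderiv : ∀ t ∈ Ioo (0:ℝ) Real.pi, HasDerivAt phi (dφ t) t := by
    intro t ht
    have h1 := (hphidiff t ⟨ht.1, ht.2.le⟩).hasDerivAt
    have h3 : deriv phi t = dφ t := by
      have h4 : ((t ^ (α-1):ℝ):ℂ) * ψ t = deriv phi t := by
        rw [show ψ t = ((t ^ (1-α):ℝ):ℂ) * deriv phi t from rfl, ← mul_assoc,
          hττ t ht.1, one_mul]
      rw [← h4, hdφ]
    rwa [h3] at h1
  -- now the main statement
  intro x hx
  rcases eq_or_lt_of_le hx.1 with hx0 | hx0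
  · -- x = 0
    rw [← hx0]
    have hQ0 : Qfun α p 0 = 0 := intervalIntegral.integral_same
    have h0α : (0:ℝ) ^ α = 0 := Real.zero_rpow hα0.ne'
    rw [intervalIntegral.integral_same, hQ0, h0α, hphi0]
    push_cast
    simp

  · -- 0 < x
    have hxπ : x ≤ Real.pi := hx.2
    set θ : ℂ := lam * ((x ^ α : ℝ) : ℂ) / (α : ℂ) - ((Qfun α p x : ℝ) : ℂ) with hθ
    set Δ : ℝ → ℂ := fun t => lam * ((x ^ α - t ^ α : ℝ) : ℂ) / (α : ℂ)
        - ((Qfun α p x : ℝ) : ℂ) + ((Qfun α p t : ℝ) : ℂ) with hΔdef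
    set A : ℝ → ℂ := fun t => Complex.sin (Δ t) with hA
    set Cc : ℝ → ℂ := fun t => Complex.cos (Δ t) with hCc
    set τ : ℝ → ℂ := fun t => ((t ^ (α - 1) : ℝ) : ℂ) with hτ
    set mA : ℝ → ℂ := fun t => Cc t * (-(τ t) * B t) with hmA
    set mC : ℝ → ℂ := fun t => -(A t) * (-(τ t) * B t) with hmC
    set ftil : ℝ → ℂ := fun t =>
      τ t * (A t * u t * ((q t + p t ^ 2 : ℝ) : ℂ) * phi t)
        + (g t : ℂ) * (A t * (u t) ^ 2 * Ψ t) with hftil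
    -- continuity of Δ, A, Cc on Icc 0 π
    have hrpowcont : ContinuousOn (fun t : ℝ => t ^ α) (Icc 0 Real.pi) := fun t _ =>
      (Real.continuousAt_rpow_const t α (Or.inr hα0.le)).continuousWithinAt
    have hΔcont : ContinuousOn Δ (Icc 0 Real.pi) := by
      refine ContinuousOn.add (ContinuousOn.sub ?_ continuousOn_const)
        (Complex.continuous_ofReal.comp_continuousOn hQcont)
      exact (continuousOn_const.mul
        (Complex.continuous_ofReal.comp_continuousOn (continuousOn_const.sub hrpowcont))).div_const _
    have hAcont : ContinuousOn A (Icc 0 Real.pi) :=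
      Complex.continuous_sin.comp_continuousOn hΔcont
    have hCcont : ContinuousOn Cc (Icc 0 Real.pi) :=
      Complex.continuous_cos.comp_continuousOn hΔcont
    -- derivative of Δ
    have hΔderiv : ∀ t ∈ Ioo (0:ℝ) Real.pi, HasDerivAt Δ (-(τ t) * B t) t := by
      intro t ht
      have h1 : HasDerivAt (fun s : ℝ => x ^ α - s ^ α) (-(α * t ^ (α - 1))) t :=
        (Real.hasDerivAt_rpow_const (Or.inl ht.1.ne')).const_sub (x ^ α)
      have h2 := h1.ofReal_comp
      have h3 := (h2.const_mul lam).div_const (α : ℂ)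
      have h4 := (hQderiv t ht).ofReal_comp
      have h5 := (h3.sub_const (((Qfun α p x : ℝ)) : ℂ)).add h4
      refine HasDerivAt.congr_deriv h5 ?_
      rw [hτ, hB]
      push_cast
      field_simp
      ring
    have hAderiv : ∀ t ∈ Ioo (0:ℝ) Real.pi, HasDerivAt A (mA t) t := fun t ht =>
      (hΔderiv t ht).csinR
    have hCderiv : ∀ t ∈ Ioo (0:ℝ) Real.pi, HasDerivAt Cc (mC t) t := fun t ht =>
      (hΔderiv t ht).ccosR
    -- endpoint values
    have hΔx : Δ x = 0 := by
      rw [hΔdef]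
      simp only [sub_self]
      push_cast
      ring
    have hAx : A x = 0 := by rw [hA]; simp only [hΔx, Complex.sin_zero]
    have hCx : Cc x = 1 := by rw [hCc]; simp only [hΔx, Complex.cos_zero]
    have hΔ0 : Δ 0 = θ := by
      rw [hΔdef, hθ]
      simp only [Real.zero_rpow hα0.ne', sub_zero]
      rw [show Qfun α p 0 = 0 from intervalIntegral.integral_same]
      push_cast
      ring
    -- integrability of ftil on [0, x]
    have hIccx : Icc (0:ℝ) x ⊆ Icc 0 Real.pi := Icc_subset_Icc le_rfl hxπ
    have hτint0 : IntervalIntegrable τ volume 0 x :=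
      (hrpow_int.ofReal').mono_set
        (by rw [uIcc_of_le hx0.le, uIcc_of_le h0π]; exact Icc_subset_Icc le_rfl hxπ)
    have hgc0 : IntervalIntegrable (fun t => (g t : ℂ)) volume 0 x :=
      hgc.mono_set (by rw [uIcc_of_le hx0.le, uIcc_of_le h0π]; exact Icc_subset_Icc le_rfl hxπ)
    have hqp2cont : ContinuousOn (fun t => ((q t + p t ^ 2 : ℝ) : ℂ)) (Icc 0 Real.pi) :=
      Complex.continuous_ofReal.comp_continuousOn (hqcont.add (hpcont.pow 2))
    have hftil_int : IntervalIntegrable ftil volume 0 x := by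
      refine IntervalIntegrable.add ?_ ?_
      · refine hτint0.mul_continuousOn ?_
        rw [uIcc_of_le hx0.le]
        exact (((hAcont.mono hIccx).mul (hucont.mono hIccx)).mul
          (hqp2cont.mono hIccx)).mul (hphicont.mono hIccx)
      · refine hgc0.mul_continuousOn ?_
        rw [uIcc_of_le hx0.le]
        exact ((hAcont.mono hIccx).mul ((hucont.mono hIccx).pow 2)).mul (hΨcont.mono hIccx)
    -- the key identity for every ε ∈ (0, x)
    have key : ∀ ε ∈ Ioo (0:ℝ) x,
        phi x = A ε * (u ε * ψ ε) + Cc ε * phi ε + ∫ t in ε..x, ftil t := by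
      intro ε hε
      have hεpos : 0 < ε := hε.1
      have hεx : ε ≤ x := hε.2.le
      have hsubI : Icc ε x ⊆ Icc 0 Real.pi := Icc_subset_Icc hεpos.le hxπ
      have hsubO : Ioo ε x ⊆ Ioo 0 Real.pi := Ioo_subset_Ioo hεpos.le hxπ
      have hm : ∀ {f : ℝ → ℂ}, IntervalIntegrable f volume 0 Real.pi →
          IntervalIntegrable f volume ε x := fun hf => hf.mono_set
        (by rw [uIcc_of_le hεx, uIcc_of_le h0π]; exact hsubI)
      -- continuity on Icc ε x
      have hτc : ContinuousOn τ (Icc ε x) := fun t ht =>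
        (Complex.continuous_ofReal.continuousAt.comp
          (Real.continuousAt_rpow_const t (α - 1)
            (Or.inl (hεpos.trans_le ht.1).ne'))).continuousWithinAt
      have hφc : ContinuousOn phi (Icc ε x) := hphicont.mono hsubI
      have hψc : ContinuousOn ψ (Icc ε x) := fun t ht =>
        (hψcontAt t ⟨hεpos.trans_le ht.1, ht.2.trans hxπ⟩).continuousWithinAt
      have hAc : ContinuousOn A (Icc ε x) := hAcont.mono hsubI
      have hCc' : ContinuousOn Cc (Icc ε x) := hCcont.mono hsubI
      have huc : ContinuousOn u (Icc ε x) := hucont.mono hsubI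
      have hBc : ContinuousOn B (Icc ε x) := hBcont.mono hsubI
      have hpc : ContinuousOn (fun t => ((p t : ℝ) : ℂ)) (Icc ε x) :=
        Complex.continuous_ofReal.comp_continuousOn (hpcont.mono hsubI)
      have hqc : ContinuousOn (fun t => ((q t : ℝ) : ℂ)) (Icc ε x) :=
        Complex.continuous_ofReal.comp_continuousOn (hqcont.mono hsubI)
      have hdψc : ContinuousOn dψ (Icc ε x) := by
        rw [hdψ]
        exact hτc.mul ((((continuousOn_const.mul hpc).add hqc).sub continuousOn_const).mul hφc)
      have hdφc : ContinuousOn dφ (Icc ε x) := by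
        rw [hdφ]; exact hτc.mul hψc
      have hmAc : ContinuousOn mA (Icc ε x) := by
        rw [hmA]; exact hCc'.mul (hτc.neg.mul hBc)
      have hmCc : ContinuousOn mC (Icc ε x) := by
        rw [hmC]; exact hAc.neg.mul (hτc.neg.mul hBc)
      -- representations on [ε, x]
      have hii : ∀ {f : ℝ → ℂ}, ContinuousOn f (Icc ε x) → IntervalIntegrable f volume ε x :=
        fun {f} hf => ContinuousOn.intervalIntegrable (by rw [uIcc_of_le hεx]; exact hf)
      have hArep := acOfDeriv hεx hAc (fun t ht => hAderiv t (hsubO ht)) (hii hmAc)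
      have hCrep := acOfDeriv hεx hCc' (fun t ht => hCderiv t (hsubO ht)) (hii hmCc)
      have hψrep := acOfDeriv hεx hψc (fun t ht => hψderiv t (hsubO ht)) (hii hdψc)
      have hφrep := acOfDeriv hεx hφc (fun t ht => hφderiv t (hsubO ht)) (hii hdφc)
      have hurepε : ∀ y ∈ Icc ε x, u y = u ε + ∫ t in ε..y, mu t := by
        intro y hy
        have hyπ : y ∈ Icc (0:ℝ) Real.pi := hsubI hy
        have h1 : u y = u 0 + ∫ t in (0:ℝ)..y, mu t := hurep y hyπ
        have h2 : u ε = u 0 + ∫ t in (0:ℝ)..ε, mu t := hurep ε (hsubI ⟨le_rfl, hεx⟩)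
        have i1 : IntervalIntegrable mu volume 0 ε := hmuint.mono_set
          (by rw [uIcc_of_le hεpos.le, uIcc_of_le h0π]
              exact Icc_subset_Icc le_rfl (hεx.trans hxπ))
        have i2 : IntervalIntegrable mu volume ε y := hmuint.mono_set
          (by rw [uIcc_of_le hy.1, uIcc_of_le h0π]
              exact Icc_subset_Icc hεpos.le (hy.2.trans hxπ))
        rw [h2, add_assoc, intervalIntegral.integral_add_adjacent_intervals i1 i2]
        exact h1
      have hmuε : IntervalIntegrable mu volume ε x := hm hmuint
      have hw1 := acMul hεx hmuε (hii hdψc) hurepε hψrep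
      have hm1int : IntervalIntegrable (fun t => mu t * ψ t + u t * dψ t) volume ε x := by
        have hfe : (fun t => mu t * ψ t + u t * dψ t)
            = fun t => (g t : ℂ) * ((u t) ^ 2 * ψ t) + u t * dψ t := by
          funext t; rw [hmu]; ring
        rw [hfe]
        exact ((hm hgc).mul_continuousOn
            (by rw [uIcc_of_le hεx]; exact (huc.pow 2).mul hψc)).add (hii (huc.mul hdψc))
      have hw2 := acMul (w1 := A) (w2 := fun t => u t * ψ t)
        (m2 := fun t => mu t * ψ t + u t * dψ t) hεx (hii hmAc) hm1int hArep hw1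
      have hw3 := acMul hεx (hii hmCc) (hii hdφc) hCrep hφrep
      have e2 := hw2 x ⟨hεx, le_rfl⟩
      have e3 := hw3 x ⟨hεx, le_rfl⟩
      have hint1 : IntervalIntegrable
          (fun t => mA t * (u t * ψ t) + A t * (mu t * ψ t + u t * dψ t)) volume ε x := by
        have hfe : (fun t => mA t * (u t * ψ t) + A t * (mu t * ψ t + u t * dψ t))
            = fun t => (g t : ℂ) * (A t * ((u t) ^ 2 * ψ t))
                + (mA t * (u t * ψ t) + A t * (u t * dψ t)) := by
          funext t; rw [hmu]; ring
        rw [hfe]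
        exact ((hm hgc).mul_continuousOn
            (by rw [uIcc_of_le hεx]; exact hAc.mul ((huc.pow 2).mul hψc))).add
          (hii ((hmAc.mul (huc.mul hψc)).add (hAc.mul (huc.mul hdψc))))
      have hint2 : IntervalIntegrable (fun t => mC t * phi t + Cc t * dφ t) volume ε x :=
        hii ((hmCc.mul hφc).add (hCc'.mul hdφc))
      have hcong : EqOn (fun t => (mA t * (u t * ψ t) + A t * (mu t * ψ t + u t * dψ t))
          + (mC t * phi t + Cc t * dφ t)) ftil (uIcc ε x) := by
        intro t ht
        rw [uIcc_of_le hεx] at ht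
        have htpos : 0 < t := hεpos.trans_le ht.1
        have htπ : t ∈ Icc (0:ℝ) Real.pi := hsubI ht
        have h1 : u t * B t = 1 := huB t htπ
        have hBdef : B t = lam - ((p t : ℝ) : ℂ) := rfl
        simp only [hftil, hmA, hmC, hmu, hdψ, hdφ, hτ, hΨ]
        rw [if_neg htpos.ne']
        push_cast
        linear_combination
          (-(((t ^ (α - 1) : ℝ) : ℂ) * Cc t * ψ t)
            - A t * ((t ^ (α - 1) : ℝ) : ℂ) * phi t * B t) * h1
          + (A t * ((t ^ (α - 1) : ℝ) : ℂ) * phi t * u t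
              * (B t + (lam - ((p t : ℝ) : ℂ)))) * hBdef
      calc phi x = A x * (u x * ψ x) + Cc x * phi x := by rw [hAx, hCx]; ring
        _ = (A ε * (u ε * ψ ε)
              + ∫ t in ε..x, (mA t * (u t * ψ t) + A t * (mu t * ψ t + u t * dψ t)))
            + (Cc ε * phi ε + ∫ t in ε..x, (mC t * phi t + Cc t * dφ t)) := by rw [e2, e3]
        _ = A ε * (u ε * ψ ε) + Cc ε * phi ε
            + ((∫ t in ε..x, (mA t * (u t * ψ t) + A t * (mu t * ψ t + u t * dψ t)))
              + ∫ t in ε..x, (mC t * phi t + Cc t * dφ t)) := by ring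
        _ = A ε * (u ε * ψ ε) + Cc ε * phi ε + ∫ t in ε..x, ftil t := by
            rw [← intervalIntegral.integral_add hint1 hint2,
              intervalIntegral.integral_congr hcong]
    -- limits as ε → 0⁺
    set l : Filter ℝ := 𝓝[Ioo (0:ℝ) x] 0 with hl
    have hlne : l.NeBot := by
      refine mem_closure_iff_nhdsWithin_neBot.1 ?_
      rw [closure_Ioo hx0.ne]
      exact ⟨le_rfl, hx0.le⟩
    have hl1 : l ≤ 𝓝[Icc (0:ℝ) Real.pi] 0 :=
      nhdsWithin_mono _ (fun t ht => ⟨ht.1.le, ht.2.le.trans hxπ⟩)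
    have hl2 : l ≤ 𝓝[Ioi (0:ℝ)] 0 := nhdsWithin_mono _ (fun t ht => ht.1)
    have hl3 : l ≤ 𝓝[Icc (0:ℝ) x] 0 := nhdsWithin_mono _ (fun t ht => ⟨ht.1.le, ht.2.le⟩)
    have h0mem : (0:ℝ) ∈ Icc (0:ℝ) Real.pi := ⟨le_rfl, h0π⟩
    have tendA : Tendsto A l (𝓝 (Complex.sin θ)) := by
      have := (hAcont 0 h0mem).mono_left hl1
      rwa [show A 0 = Complex.sin θ by rw [hA]; simp only [hΔ0]] at this
    have tendC : Tendsto Cc l (𝓝 (Complex.cos θ)) := by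
      have := (hCcont 0 h0mem).mono_left hl1
      rwa [show Cc 0 = Complex.cos θ by rw [hCc]; simp only [hΔ0]] at this
    have tendu : Tendsto u l (𝓝 (u 0)) := (hucont 0 h0mem).mono_left hl1
    have tendφ : Tendsto phi l (𝓝 1) := by
      have := (hphicont 0 h0mem).mono_left hl1
      rwa [hphi0] at this
    have tendψ : Tendsto ψ l (𝓝 (h:ℂ)) := hpsilim.mono_left hl2
    have tendInt : Tendsto (fun ε => ∫ t in ε..x, ftil t) l (𝓝 (∫ t in (0:ℝ)..x, ftil t)) := by
      have hprim : ContinuousOn (fun b => ∫ t in (0:ℝ)..b, ftil t) (Icc 0 x) := by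
        have := intervalIntegral.continuousOn_primitive_interval' hftil_int
          (by rw [uIcc_of_le hx0.le]; exact ⟨le_rfl, hx0.le⟩)
        rwa [uIcc_of_le hx0.le] at this
      have h1 : Tendsto (fun ε => ∫ t in (0:ℝ)..ε, ftil t) l
          (𝓝 (∫ t in (0:ℝ)..(0:ℝ), ftil t)) := (hprim 0 ⟨le_rfl, hx0.le⟩).mono_left hl3
      rw [intervalIntegral.integral_same] at h1
      have h2 : Tendsto (fun ε => (∫ t in (0:ℝ)..x, ftil t) - ∫ t in (0:ℝ)..ε, ftil t) l
          (𝓝 ((∫ t in (0:ℝ)..x, ftil t) - 0)) := tendsto_const_nhds.sub h1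
      rw [sub_zero] at h2
      refine h2.congr' ?_
      filter_upwards [self_mem_nhdsWithin] with ε hε
      have i1 : IntervalIntegrable ftil volume 0 ε := hftil_int.mono_set
        (by rw [uIcc_of_le hε.1.le, uIcc_of_le hx0.le]; exact Icc_subset_Icc le_rfl hε.2.le)
      have i2 : IntervalIntegrable ftil volume ε x := hftil_int.mono_set
        (by rw [uIcc_of_le hε.2.le, uIcc_of_le hx0.le]; exact Icc_subset_Icc hε.1.le le_rfl)
      rw [← intervalIntegral.integral_add_adjacent_intervals i1 i2]
      ring
    have hlimRHS : Tendsto (fun ε => A ε * (u ε * ψ ε) + Cc ε * phi ε + ∫ t in ε..x, ftil t) l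
        (𝓝 (Complex.sin θ * (u 0 * (h:ℂ)) + Complex.cos θ * 1 + ∫ t in (0:ℝ)..x, ftil t)) :=
      ((tendA.mul (tendu.mul tendψ)).add (tendC.mul tendφ)).add tendInt
    have hlimLHS : Tendsto (fun _ : ℝ => phi x) l (𝓝 (phi x)) := tendsto_const_nhds
    have heq : (fun _ : ℝ => phi x) =ᶠ[l] 
        (fun ε => A ε * (u ε * ψ ε) + Cc ε * phi ε + ∫ t in ε..x, ftil t) := by
      filter_upwards [self_mem_nhdsWithin] with ε hε
      exact key ε hε
    have hfinal : phi x = Complex.sin θ * (u 0 * (h:ℂ)) + Complex.cos θ * 1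
        + ∫ t in (0:ℝ)..x, ftil t :=
      tendsto_nhds_unique (hlimLHS.congr' heq) hlimRHS
    -- identify the goal integral with ∫ ftil
    have hcongr : (∫ t in (0:ℝ)..x,
        ((t ^ (α - 1) : ℝ) : ℂ) *
          (Complex.sin (lam * ((x ^ α - t ^ α : ℝ) : ℂ) / (α : ℂ)
                - ((Qfun α p x : ℝ) : ℂ) + ((Qfun α p t : ℝ) : ℂ))
              / (lam - (p t : ℂ))
            * (((q t + p t ^ 2 : ℝ) : ℂ) * phi t
                + ((cfDerivR α p t : ℝ) : ℂ) / (lam - (p t : ℂ)) * cfDeriv α phi t)))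
        = ∫ t in (0:ℝ)..x, ftil t := by
      have hgg : Integrable ((Ioc (0:ℝ) Real.pi).indicator g) volume :=
        hgint.1.integrable_indicator measurableSet_Ioc
      have hP := ae_hasDerivAt_primitive hgg
      have hae1 : ∀ᵐ t : ℝ, t ∈ Ioo 0 Real.pi → deriv p t = g t := by
        filter_upwards [hP] with t hPt htIoo
        have hind : ∀ y ∈ Icc (0:ℝ) Real.pi,
            (∫ s in (0:ℝ)..y, (Ioc (0:ℝ) Real.pi).indicator g s) = ∫ s in (0:ℝ)..y, g s := by
          intro y hy
          rw [intervalIntegral.integral_of_le hy.1, intervalIntegral.integral_of_le hy.1,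
            MeasureTheory.setIntegral_indicator measurableSet_Ioc,
            show Ioc (0:ℝ) y ∩ Ioc 0 Real.pi = Ioc 0 y from
              inter_eq_left.2 (Ioc_subset_Ioc le_rfl hy.2)]
        have hloc : (fun y => p 0 + ∫ s in (0:ℝ)..y, (Ioc (0:ℝ) Real.pi).indicator g s)
            =ᶠ[𝓝 t] p := by
          filter_upwards [isOpen_Ioo.mem_nhds htIoo] with y hy
          rw [hind y ⟨hy.1.le, hy.2.le⟩, ← hgrep y ⟨hy.1.le, hy.2.le⟩]
        have hPD : HasDerivAt p ((Ioc (0:ℝ) Real.pi).indicator g t) t :=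
          (hPt.const_add (p 0)).congr_of_eventuallyEq hloc.symm
        rw [hPD.deriv, Set.indicator_of_mem (Ioo_subset_Ioc_self htIoo)]
      have haeπ : ∀ᵐ t : ℝ, t ≠ Real.pi := by
        rw [MeasureTheory.ae_iff, show {t : ℝ | ¬ t ≠ Real.pi} = {Real.pi} by ext s; simp]
        exact measure_singleton _
      refine intervalIntegral.integral_congr_ae ?_
      filter_upwards [hae1, haeπ] with t ht1 ht2 htmem
      rw [uIoc_of_le hx0.le] at htmem
      have htIoo : t ∈ Ioo (0:ℝ) Real.pi := ⟨htmem.1, lt_of_le_of_ne (htmem.2.trans hxπ) ht2⟩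
      have hdp : deriv p t = g t := ht1 htIoo
      have hBt : lam - ((p t : ℝ) : ℂ) ≠ 0 := hBne t ⟨htIoo.1.le, htIoo.2.le⟩
      have h1 := hττ t htIoo.1
      have hcd : ((cfDerivR α p t : ℝ) : ℂ) = ((t ^ (1 - α) : ℝ) : ℂ) * ((g t : ℝ) : ℂ) := by
        rw [cfDerivR, hdp]; push_cast; ring
      simp only [hftil, hτ, hA, hu, hB, hΨ, hΔdef, hψ]
      rw [if_neg htIoo.1.ne', hcd, alg_helper _ _ _ _ _ _ _ _ h1]
    rw [hcongr, hfinal]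
    rw [show u 0 = (lam - ((p 0 : ℝ) : ℂ))⁻¹ from rfl, div_eq_mul_inv]
    ring

end
end

section
/- There exist constants C > 0 and r > 0 such that for all λ ∈ ℂ with |λ| ≥ r and all x ∈ [0,π], |φ(x,λ)| ≤ C exp(|τ| x^α/α) and |D^α φ(x,λ)| ≤ C |λ| exp(|τ| x^α/α), where λ = σ + iτ. -/
set_option maxHeartbeats 1000000


open Set Filter Topology MeasureTheory intervalIntegral

noncomputable section

lemma AbsContOn.continuousOn {f : ℝ → ℝ} (hf : AbsContOn f 0 Real.pi) :
    ContinuousOn f (Set.Icc 0 Real.pi) := by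
  obtain ⟨g, hgint, heq⟩ := hf
  have hInt : IntegrableOn g (Set.uIcc (0:ℝ) Real.pi) volume := by
    rw [Set.uIcc_of_le Real.pi_pos.le]
    exact (intervalIntegrable_iff_integrableOn_Icc_of_le Real.pi_pos.le).1 hgint
  have : ContinuousOn (fun x => f 0 + ∫ t in (0:ℝ)..x, g t) (Set.Icc 0 Real.pi) :=
    continuousOn_const.add ((intervalIntegral.continuousOn_primitive_interval hInt).mono (by rw [Set.uIcc_of_le Real.pi_pos.le]))
  exact this.congr heq

lemma bound_of_continuousOn {f : ℝ → ℝ} (hf : ContinuousOn f (Set.Icc 0 Real.pi)) :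
    ∃ N : ℝ, 0 ≤ N ∧ ∀ x ∈ Set.Icc (0:ℝ) Real.pi, |f x| ≤ N := by
  obtain ⟨N, hN⟩ := isCompact_Icc.exists_bound_of_continuousOn hf
  refine ⟨N, le_trans (abs_nonneg _) (hN 0 (by simp [Real.pi_pos.le])), fun x hx => hN x hx⟩

lemma xmap_hasDerivAt {α : ℝ} (hα0 : 0 < α) {t : ℝ} (ht : 0 < t) :
    HasDerivAt (fun s : ℝ => (α * s) ^ (α⁻¹ : ℝ))
      (((α * t) ^ (α⁻¹ : ℝ)) ^ (1 - α)) t := by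
  have hat : 0 < α * t := by positivity
  have h1 : HasDerivAt (fun s : ℝ => α * s) α t := by
    simpa using (hasDerivAt_id t).const_mul α
  have h2 := (Real.hasDerivAt_rpow_const (p := α⁻¹) (Or.inl hat.ne')).comp t h1
  refine h2.congr_deriv ?_
  symm
  rw [← Real.rpow_mul hat.le]
  rw [show α⁻¹ * (1 - α) = α⁻¹ - 1 by field_simp]
  field_simp

/-- Integral form of Grönwall's inequality. -/
lemma gronwall_integral {f : ℝ → ℝ} (hf : Continuous f) (hfpos : ∀ t, 0 ≤ f t)
    {T A B : ℝ} (hT : 0 ≤ T) (hA : 0 ≤ A) (hB : 0 ≤ B)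
    (hbound : ∀ t ∈ Set.Icc (0:ℝ) T, f t ≤ A + B * ∫ s in (0:ℝ)..t, f s) :
    ∀ t ∈ Set.Icc (0:ℝ) T, f t ≤ A * Real.exp (B * t) := by
  set G : ℝ → ℝ := fun t => A + B * ∫ s in (0:ℝ)..t, f s with hGdef
  have hG' : ∀ t : ℝ, HasDerivAt G (B * f t) t := by
    intro t
    have h1 : HasDerivAt (fun u => ∫ s in (0:ℝ)..u, f s) (f t) t :=
      intervalIntegral.integral_hasDerivAt_right (hf.intervalIntegrable _ _)
        (hf.stronglyMeasurableAtFilter _ _) hf.continuousAt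
    simpa [hGdef] using (h1.const_mul B).const_add A
  have hGcont : ContinuousOn G (Set.Icc 0 T) := fun t _ =>
    (hG' t).continuousAt.continuousWithinAt
  have hG0 : ‖G 0‖ ≤ A := by
    simp [hGdef, abs_of_nonneg hA]
  have key := norm_le_gronwallBound_of_norm_deriv_right_le (a := 0) (b := T) (ε := 0) (K := B)
    hGcont (fun t _ => (hG' t).hasDerivWithinAt) hG0 ?_
  · intro t ht
    have h2 : f t ≤ G t := hbound t ht
    have h3 : 0 ≤ G t := le_trans (hfpos t) h2
    calc f t ≤ G t := h2
      _ = ‖G t‖ := (Real.norm_of_nonneg h3).symm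
      _ ≤ gronwallBound A B 0 (t - 0) := key t ht
      _ = A * Real.exp (B * t) := by rw [gronwallBound_ε0]; ring_nf
  · intro t ht
    have h2 : f t ≤ G t := hbound t (Set.mem_Icc.2 ⟨ht.1, ht.2.le⟩)
    have h3 : 0 ≤ G t := le_trans (hfpos t) h2
    rw [Real.norm_of_nonneg (mul_nonneg hB (hfpos t)),
      Real.norm_of_nonneg h3]
    have := mul_le_mul_of_nonneg_left h2 hB
    linarith

lemma key (α hh Np Nq : ℝ) (hα0 : 0 < α) (hα1 : α ≤ 1) (p q : ℝ → ℝ)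
    (hpc : ContinuousOn p (Set.Icc 0 Real.pi)) (hqc : ContinuousOn q (Set.Icc 0 Real.pi))
    (hpb : ∀ x ∈ Set.Icc (0:ℝ) Real.pi, |p x| ≤ Np)
    (hqb : ∀ x ∈ Set.Icc (0:ℝ) Real.pi, |q x| ≤ Nq)
    (lam : ℂ) (hlam : 1 + |hh| ≤ ‖lam‖) (y : ℝ → ℂ)
    (hy : IsPhi α hh p q lam y) :
    ∀ x ∈ Set.Icc (0:ℝ) Real.pi,
      ‖y x‖ ≤
        (2 * Real.exp ((2*Np+Nq+1) * (Real.pi ^ α / α))) * Real.exp (|lam.im| * x ^ α / α) ∧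
      ‖cfDeriv α y x‖ ≤
        (2 * Real.exp ((2*Np+Nq+1) * (Real.pi ^ α / α))) * ‖lam‖ *
          Real.exp (|lam.im| * x ^ α / α) := by
  obtain ⟨⟨hycont, hydiff, hydiff2, hode⟩, hy0, htend⟩ := hy
  set T : ℝ := Real.pi ^ α / α with hTdef
  have hT : 0 < T := by
    have := Real.rpow_pos_of_pos Real.pi_pos α
    positivity
  set B : ℝ := 2*Np+Nq+1 with hBdef
  have hNp : 0 ≤ Np := le_trans (abs_nonneg _) (hpb 0 (by simp [Real.pi_pos.le]))
  have hNq : 0 ≤ Nq := le_trans (abs_nonneg _) (hqb 0 (by simp [Real.pi_pos.le]))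
  have hB : 0 < B := by positivity
  have hlam1 : 1 ≤ ‖lam‖ := le_trans (by simp [abs_nonneg]) hlam
  have hlam0 : lam ≠ 0 := by
    intro h; rw [h] at hlam1; simp at hlam1; linarith
  have hlamh : |hh| ≤ ‖lam‖ := by linarith
  -- the change of variables map
  set X : ℝ → ℝ := fun t => (α * t) ^ (α⁻¹ : ℝ) with hXdef
  have hX0 : X 0 = 0 := by
    simp only [hXdef, mul_zero]; exact Real.zero_rpow (by positivity)
  have hXpos : ∀ t : ℝ, 0 < t → 0 < X t := fun t ht =>
    Real.rpow_pos_of_pos (by positivity) _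
  have hXle : ∀ t : ℝ, 0 ≤ t → t ≤ T → X t ≤ Real.pi := by
    intro t ht0 ht
    have h1 : α * t ≤ Real.pi ^ α := by
      rw [hTdef] at ht
      calc α * t ≤ α * (Real.pi ^ α / α) := by nlinarith
        _ = Real.pi ^ α := by field_simp
    calc X t ≤ (Real.pi ^ α) ^ (α⁻¹ : ℝ) :=
          Real.rpow_le_rpow (mul_nonneg hα0.le ht0) h1 (by positivity)
      _ = Real.pi := Real.rpow_rpow_inv Real.pi_pos.le hα0.ne'
  have hXinv : ∀ x : ℝ, 0 ≤ x → X (x ^ α / α) = x := by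
    intro x hx
    rw [hXdef]
    simp only
    rw [show α * (x ^ α / α) = x ^ α by field_simp]
    exact Real.rpow_rpow_inv hx hα0.ne'
  have hXmem : ∀ t : ℝ, t ∈ Set.Ioc 0 T → X t ∈ Set.Ioc 0 Real.pi := fun t ht =>
    ⟨hXpos t ht.1, hXle t ht.1.le ht.2⟩
  have hXmem' : ∀ t : ℝ, t ∈ Set.Ioo 0 T → X t ∈ Set.Ioo 0 Real.pi := by
    intro t ht
    refine ⟨hXpos t ht.1, ?_⟩
    have h1 : α * t < Real.pi ^ α := by
      have h2 := mul_lt_mul_of_pos_left ht.2 hα0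
      rw [hTdef, mul_div_cancel₀ _ hα0.ne'] at h2
      exact h2
    calc X t < (Real.pi ^ α) ^ (α⁻¹ : ℝ) :=
          Real.rpow_lt_rpow (mul_nonneg hα0.le ht.1.le) h1 (by positivity)
      _ = Real.pi := Real.rpow_rpow_inv Real.pi_pos.le hα0.ne'
  -- the clamped map
  set Z : ℝ → ℝ := fun t => X (max 0 (min t T)) with hZdef
  have hZ0 : Z 0 = 0 := by
    show X (max 0 (min 0 T)) = 0
    rw [min_eq_left hT.le, max_self]
    exact hX0
  have hclampmem : ∀ t : ℝ, max 0 (min t T) ∈ Set.Icc 0 T := fun t =>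
    ⟨le_max_left _ _, max_le hT.le (min_le_right _ _)⟩
  have hclamp_eq : ∀ t ∈ Set.Icc (0:ℝ) T, max 0 (min t T) = t := by
    intro t ht
    rw [min_eq_left ht.2, max_eq_right ht.1]
  have hZmem : ∀ t : ℝ, Z t ∈ Set.Icc 0 Real.pi := by
    intro t
    constructor
    · exact (Real.rpow_nonneg (mul_nonneg hα0.le (hclampmem t).1) _)
    · exact hXle _ (hclampmem t).1 (hclampmem t).2
  have hZcont : Continuous Z := by
    rw [hZdef]
    have hinner : Continuous fun t : ℝ => α * max 0 (min t T) :=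
      continuous_const.mul (continuous_const.max (continuous_id.min continuous_const))
    rw [continuous_iff_continuousAt]
    intro t
    exact (Real.continuousAt_rpow_const _ _ (Or.inr (by positivity))).comp hinner.continuousAt
  have hZpos : ∀ t ∈ Set.Ioc (0:ℝ) T, Z t = X t ∧ 0 < Z t := by
    intro t ht
    have h1 : Z t = X t := by
      show X (max 0 (min t T)) = X t
      rw [hclamp_eq t ⟨ht.1.le, ht.2⟩]
    exact ⟨h1, h1 ▸ hXpos t ht.1⟩
  -- the transformed solution and its conformable derivative, as global functions
  set Ub : ℝ → ℂ := fun t => y (Z t) with hUbdef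
  set Vb : ℝ → ℂ := fun t => if 0 < t then cfDeriv α y (Z t) else (hh : ℂ) with hVbdef
  have hUb0 : Ub 0 = 1 := by rw [hUbdef]; simp only [hZ0]; exact hy0
  have hVb0 : Vb 0 = (hh : ℂ) := by rw [hVbdef]; simp
  have hUbcont : Continuous Ub := hycont.comp_continuous hZcont hZmem
  have hVbeq : ∀ t ∈ Set.Ioc (0:ℝ) T, Vb t = cfDeriv α y (X t) := by
    intro t ht
    rw [hVbdef]
    simp only [if_pos ht.1, (hZpos t ht).1]
  have hUbeq : ∀ t ∈ Set.Icc (0:ℝ) T, Ub t = y (X t) := by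
    intro t ht
    rw [hUbdef]; simp only [hZdef, hclamp_eq t ht]
  have hZpos' : ∀ s : ℝ, 0 < s → 0 < Z s := fun s hs =>
    hXpos _ (lt_max_of_lt_right (lt_min hs hT))
  have hcfcont : ∀ x ∈ Set.Ioc (0:ℝ) Real.pi, ContinuousAt (cfDeriv α y) x := fun x hx =>
    (hydiff2 x hx).continuousAt
  have hVbcont : Continuous Vb := by
    rw [continuous_iff_continuousAt]
    intro t
    rcases lt_trichotomy t 0 with ht | ht | ht
    · have : Vb =ᶠ[𝓝 t] fun _ => (hh : ℂ) := by
        filter_upwards [eventually_lt_nhds ht] with s hs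
        rw [hVbdef]; simp [not_lt.2 hs.le]
      exact ContinuousAt.congr continuousAt_const this.symm
    · subst ht
      rw [continuousAt_iff_continuous_left_right]
      constructor
      · apply ContinuousWithinAt.congr (f := fun _ => (hh : ℂ)) continuousWithinAt_const
        · intro s hs
          rw [hVbdef]; simp [not_lt.2 (Set.mem_Iic.1 hs)]
        · rw [hVb0]
      · -- within Ici 0
        rw [← Set.Ioi_insert, continuousWithinAt_insert_self]
        rw [ContinuousWithinAt, hVb0]
        have hZt : Tendsto Z (𝓝[>] (0:ℝ)) (𝓝[>] (0:ℝ)) := by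
          apply tendsto_nhdsWithin_of_tendsto_nhds_of_eventually_within
          · have h1 := hZcont.tendsto 0
            rw [hZ0] at h1
            exact h1.mono_left nhdsWithin_le_nhds
          · filter_upwards [self_mem_nhdsWithin] with s hs
            exact hZpos' s hs
        have h2 : Tendsto (fun s => cfDeriv α y (Z s)) (𝓝[>] (0:ℝ)) (𝓝 (hh:ℂ)) :=
          htend.comp hZt
        apply h2.congr'
        filter_upwards [self_mem_nhdsWithin] with s hs
        rw [hVbdef]
        simp only
        rw [if_pos (Set.mem_Ioi.1 hs)]
    · have h3 : 0 < Z t := hZpos' t ht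
      have h4 : ContinuousAt (fun s => cfDeriv α y (Z s)) t :=
        (hcfcont (Z t) ⟨h3, (hZmem t).2⟩).comp hZcont.continuousAt
      apply h4.congr
      filter_upwards [eventually_gt_nhds ht] with s hs
      rw [hVbdef]
      simp only
      rw [if_pos hs]
  -- coefficient function
  set c : ℝ → ℂ := fun t => 2 * lam * ((p (Z t) : ℝ) : ℂ) + ((q (Z t) : ℝ) : ℂ) with hcdef
  have hccont : Continuous c := by
    have h1 : Continuous fun t => p (Z t) := hpc.comp_continuous hZcont hZmem
    have h2 : Continuous fun t => q (Z t) := hqc.comp_continuous hZcont hZmem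
    exact (continuous_const.mul (Complex.continuous_ofReal.comp h1)).add
      (Complex.continuous_ofReal.comp h2)
  have hcbound : ∀ t : ℝ, ‖c t‖ ≤ ‖lam‖ * B := by
    intro t
    have h1 := hpb (Z t) (hZmem t)
    have h2 := hqb (Z t) (hZmem t)
    calc ‖c t‖
        ≤ ‖2 * lam * ((p (Z t) : ℝ) : ℂ)‖ + ‖((q (Z t) : ℝ) : ℂ)‖ :=
          norm_add_le _ _
      _ = 2 * ‖lam‖ * |p (Z t)| + |q (Z t)| := by
          rw [norm_mul, norm_mul, Complex.norm_real, Complex.norm_real, Real.norm_eq_abs, Real.norm_eq_abs]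
          norm_num
      _ ≤ ‖lam‖ * B := by
          rw [hBdef]
          have h3 := norm_nonneg lam
          have h4 := abs_nonneg (p (Z t))
          nlinarith
  have hU' : ∀ t ∈ Set.Ioo (0:ℝ) T, HasDerivAt Ub (Vb t) t := by
    intro t ht
    have hXt := xmap_hasDerivAt hα0 ht.1
    have hXmemt := hXmem t ⟨ht.1, ht.2.le⟩
    have hyd : HasDerivAt y (deriv y (X t)) (X t) := (hydiff _ hXmemt).hasDerivAt
    have hchain : HasDerivAt (fun s => y (X s)) ((X t) ^ (1-α) • deriv y (X t)) t :=
      hyd.scomp t hXt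
    have heq : Ub =ᶠ[𝓝 t] fun s => y (X s) := by
      filter_upwards [Ioo_mem_nhds ht.1 ht.2] with s hs
      exact hUbeq s ⟨hs.1.le, hs.2.le⟩
    have h2 : HasDerivAt Ub ((X t) ^ (1-α) • deriv y (X t)) t :=
      hchain.congr_of_eventuallyEq heq
    convert h2 using 1
    rw [hVbeq t ⟨ht.1, ht.2.le⟩]
    show ((X t ^ (1-α) : ℝ) : ℂ) * deriv y (X t) = _
    rw [Complex.real_smul]
  have hV' : ∀ t ∈ Set.Ioo (0:ℝ) T, HasDerivAt Vb ((c t - lam^2) * Ub t) t := by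
    intro t ht
    have hXt := xmap_hasDerivAt hα0 ht.1
    have hXmemt := hXmem t ⟨ht.1, ht.2.le⟩
    have hyd : HasDerivAt (cfDeriv α y) (deriv (cfDeriv α y) (X t)) (X t) :=
      (hydiff2 _ hXmemt).hasDerivAt
    have hchain : HasDerivAt (fun s => cfDeriv α y (X s))
        ((X t) ^ (1-α) • deriv (cfDeriv α y) (X t)) t := hyd.scomp t hXt
    have heq : Vb =ᶠ[𝓝 t] fun s => cfDeriv α y (X s) := by
      filter_upwards [Ioo_mem_nhds ht.1 ht.2] with s hs
      exact hVbeq s ⟨hs.1, hs.2.le⟩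
    have h2 : HasDerivAt Vb ((X t) ^ (1-α) • deriv (cfDeriv α y) (X t)) t :=
      hchain.congr_of_eventuallyEq heq
    convert h2 using 1
    have hXoo := hXmem' t ht
    have hodet := hode (X t) hXoo
    have hZX := (hZpos t ⟨ht.1, ht.2.le⟩).1
    rw [hUbeq t ⟨ht.1.le, ht.2.le⟩, hcdef]
    simp only [hZX]
    rw [Complex.real_smul]
    have hrfl : ((X t ^ (1-α) : ℝ) : ℂ) * deriv (cfDeriv α y) (X t)
        = cfDeriv α (cfDeriv α y) (X t) := rfl
    rw [hrfl]
    linear_combination hodet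
  -- diagonalized system
  set w1 : ℝ → ℂ := fun t => Vb t + Complex.I * lam * Ub t with hw1def
  set w2 : ℝ → ℂ := fun t => Vb t - Complex.I * lam * Ub t with hw2def
  have hw1cont : Continuous w1 := hVbcont.add (continuous_const.mul hUbcont)
  have hw2cont : Continuous w2 := hVbcont.sub (continuous_const.mul hUbcont)
  have hexp1 : ∀ t : ℝ, HasDerivAt (fun s : ℝ => Complex.exp (-(Complex.I * lam * s)))
      (-(Complex.I * lam) * Complex.exp (-(Complex.I * lam * t))) t := by
    intro t
    have h0 : HasDerivAt (fun s : ℝ => (s : ℂ)) 1 t := by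
      exact Complex.ofRealCLM.hasDerivAt (x := t)
    have h1 : HasDerivAt (fun s : ℝ => -(Complex.I * lam * s)) (-(Complex.I * lam)) t := by
      have h := (h0.const_mul (Complex.I * lam)).neg
      simp only [mul_one] at h
      exact h
    simpa [mul_comm] using h1.cexp
  have hexp2 : ∀ t : ℝ, HasDerivAt (fun s : ℝ => Complex.exp (Complex.I * lam * s))
      ((Complex.I * lam) * Complex.exp (Complex.I * lam * t)) t := by
    intro t
    have h0 : HasDerivAt (fun s : ℝ => (s : ℂ)) 1 t := by
      exact Complex.ofRealCLM.hasDerivAt (x := t)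
    have h1 : HasDerivAt (fun s : ℝ => Complex.I * lam * s) (Complex.I * lam) t := by
      simpa using (h0.const_mul (Complex.I * lam))
    simpa [mul_comm] using h1.cexp
  set g1 : ℝ → ℂ := fun t => w1 t * Complex.exp (-(Complex.I * lam * t)) with hg1def
  set g2 : ℝ → ℂ := fun t => w2 t * Complex.exp (Complex.I * lam * t) with hg2def
  set F1 : ℝ → ℂ := fun t => c t * Ub t * Complex.exp (-(Complex.I * lam * t)) with hF1def
  set F2 : ℝ → ℂ := fun t => c t * Ub t * Complex.exp (Complex.I * lam * t) with hF2def
  have hF1cont : Continuous F1 := by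
    apply (hccont.mul hUbcont).mul
    exact Complex.continuous_exp.comp ((continuous_const.mul Complex.continuous_ofReal).neg)
  have hF2cont : Continuous F2 := by
    apply (hccont.mul hUbcont).mul
    exact Complex.continuous_exp.comp (continuous_const.mul Complex.continuous_ofReal)
  have hg1' : ∀ t ∈ Set.Ioo (0:ℝ) T, HasDerivAt g1 (F1 t) t := by
    intro t ht
    have hw1' : HasDerivAt w1 ((c t - lam^2) * Ub t + Complex.I * lam * Vb t) t :=
      (hV' t ht).add ((hU' t ht).const_mul (Complex.I * lam))
    have h2 := hw1'.mul (hexp1 t)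
    refine h2.congr_deriv ?_
    symm
    rw [hF1def, hw1def]
    simp only
    linear_combination (lam^2 * Ub t * Complex.exp (-(Complex.I * lam * t))) * Complex.I_sq
  have hg2' : ∀ t ∈ Set.Ioo (0:ℝ) T, HasDerivAt g2 (F2 t) t := by
    intro t ht
    have hw2' : HasDerivAt w2 ((c t - lam^2) * Ub t - Complex.I * lam * Vb t) t :=
      (hV' t ht).sub ((hU' t ht).const_mul (Complex.I * lam))
    have h2 := hw2'.mul (hexp2 t)
    refine h2.congr_deriv ?_
    symm
    rw [hF2def, hw2def]
    simp only
    linear_combination (lam^2 * Ub t * Complex.exp (Complex.I * lam * t)) * Complex.I_sq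
  -- fundamental theorem of calculus
  have hftc1 : ∀ t ∈ Set.Icc (0:ℝ) T, g1 t = g1 0 + ∫ s in (0:ℝ)..t, F1 s := by
    intro t ht
    have := intervalIntegral.integral_eq_sub_of_hasDeriv_right_of_le ht.1
      ((hw1cont.mul (Complex.continuous_exp.comp
        ((continuous_const.mul Complex.continuous_ofReal).neg))).continuousOn)
      (fun s hs => (hg1' s ⟨hs.1, lt_of_lt_of_le hs.2 ht.2⟩).hasDerivWithinAt)
      (hF1cont.intervalIntegrable _ _)
    rw [this]; simp only [hg1def, Pi.mul_apply, Function.comp_apply, Pi.neg_apply]; ring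
  have hftc2 : ∀ t ∈ Set.Icc (0:ℝ) T, g2 t = g2 0 + ∫ s in (0:ℝ)..t, F2 s := by
    intro t ht
    have := intervalIntegral.integral_eq_sub_of_hasDeriv_right_of_le ht.1
      ((hw2cont.mul (Complex.continuous_exp.comp
        (continuous_const.mul Complex.continuous_ofReal))).continuousOn)
      (fun s hs => (hg2' s ⟨hs.1, lt_of_lt_of_le hs.2 ht.2⟩).hasDerivWithinAt)
      (hF2cont.intervalIntegrable _ _)
    rw [this]; simp only [hg2def, Pi.mul_apply, Function.comp_apply]; ring
  -- scalar estimates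
  have hτa1 : -|lam.im| ≤ lam.im := neg_abs_le _
  have hτa2 : lam.im ≤ |lam.im| := le_abs_self _
  have hA1 : ∀ s : ℝ, ‖Complex.exp (-(Complex.I * lam * s))‖
      = Real.exp (lam.im * s) := by
    intro s
    rw [Complex.norm_exp]
    congr 1
    simp [Complex.mul_re, Complex.mul_im]
  have hA2 : ∀ s : ℝ, ‖Complex.exp (Complex.I * lam * s)‖
      = Real.exp (-(lam.im * s)) := by
    intro s
    rw [Complex.norm_exp]
    congr 1
    simp [Complex.mul_re, Complex.mul_im]
  set a : ℝ := |lam.im| with hadef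
  set fs : ℝ → ℝ := fun s => (‖w1 s‖ + ‖w2 s‖) * Real.exp (-(a * s))
    with hfsdef
  have hfscont : Continuous fs := by
    apply ((continuous_norm.comp hw1cont).add (continuous_norm.comp hw2cont)).mul
    exact Real.continuous_exp.comp (continuous_const.mul continuous_id).neg
  have hfsnn : ∀ s, 0 ≤ fs s := fun s =>
    mul_nonneg (add_nonneg (norm_nonneg _) (norm_nonneg _)) (Real.exp_pos _).le
  have hUbb : ∀ s : ℝ, ‖Ub s‖
      ≤ (‖w1 s‖ + ‖w2 s‖) / (2 * ‖lam‖) := by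
    intro s
    have h1 : w1 s - w2 s = 2 * Complex.I * lam * Ub s := by rw [hw1def, hw2def]; ring
    have h2 : ‖w1 s - w2 s‖ = 2 * ‖lam‖ * ‖Ub s‖ := by
      rw [h1, norm_mul, norm_mul, norm_mul]
      simp [Complex.norm_I, Complex.norm_two]
    have h3 : ‖w1 s - w2 s‖ ≤ ‖w1 s‖ + ‖w2 s‖ :=
      by simpa using norm_sub_le (w1 s) (w2 s)
    rw [le_div_iff₀ (by positivity : (0:ℝ) < 2 * ‖lam‖)]
    linarith
  have hVbb : ∀ s : ℝ, ‖Vb s‖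
      ≤ (‖w1 s‖ + ‖w2 s‖) / 2 := by
    intro s
    have h1 : Vb s = (w1 s + w2 s) / 2 := by rw [hw1def, hw2def]; ring
    rw [h1, norm_div]
    simp only [Complex.norm_two]
    have := norm_add_le (w1 s) (w2 s)
    linarith
  have hptw1 : ∀ t ∈ Set.Icc (0:ℝ) T, ∀ s ∈ Set.Icc (0:ℝ) t,
      ‖F1 s‖ * Real.exp (-((lam.im + a) * t)) ≤ B/2 * fs s := by
    intro t ht s hs
    have habsF1 : ‖F1 s‖
        = ‖c s‖ * ‖Ub s‖ * Real.exp (lam.im * s) := by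
      rw [hF1def]
      simp only
      rw [norm_mul, norm_mul, hA1]
    have hcu : ‖c s‖ * ‖Ub s‖
        ≤ B/2 * (‖w1 s‖ + ‖w2 s‖) := by
      have h1 := mul_le_mul (hcbound s) (hUbb s) (norm_nonneg _)
        (by positivity)
      calc ‖c s‖ * ‖Ub s‖
          ≤ ‖lam‖ * B * ((‖w1 s‖ + ‖w2 s‖)
            / (2 * ‖lam‖)) := h1
        _ = B/2 * (‖w1 s‖ + ‖w2 s‖) := by
            have hln0 : ‖lam‖ ≠ 0 := by positivity
            field_simp
    have hexp : Real.exp (lam.im * s) * Real.exp (-((lam.im + a) * t))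
        ≤ Real.exp (-(a * s)) := by
      rw [← Real.exp_add, Real.exp_le_exp]
      have h2 : (lam.im + a) * s ≤ (lam.im + a) * t :=
        mul_le_mul_of_nonneg_left hs.2 (by linarith)
      linarith
    calc ‖F1 s‖ * Real.exp (-((lam.im + a) * t))
        = (‖c s‖ * ‖Ub s‖)
          * (Real.exp (lam.im * s) * Real.exp (-((lam.im + a) * t))) := by
          rw [habsF1]; ring
      _ ≤ (B/2 * (‖w1 s‖ + ‖w2 s‖)) * Real.exp (-(a * s)) := by
          apply mul_le_mul hcu hexp (by positivity) (by positivity)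
      _ = B/2 * fs s := by rw [hfsdef]; ring
  have hptw2 : ∀ t ∈ Set.Icc (0:ℝ) T, ∀ s ∈ Set.Icc (0:ℝ) t,
      ‖F2 s‖ * Real.exp ((lam.im - a) * t) ≤ B/2 * fs s := by
    intro t ht s hs
    have habsF2 : ‖F2 s‖
        = ‖c s‖ * ‖Ub s‖ * Real.exp (-(lam.im * s)) := by
      rw [hF2def]
      simp only
      rw [norm_mul, norm_mul, hA2]
    have hcu : ‖c s‖ * ‖Ub s‖
        ≤ B/2 * (‖w1 s‖ + ‖w2 s‖) := by
      have h1 := mul_le_mul (hcbound s) (hUbb s) (norm_nonneg _)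
        (by positivity)
      calc ‖c s‖ * ‖Ub s‖
          ≤ ‖lam‖ * B * ((‖w1 s‖ + ‖w2 s‖)
            / (2 * ‖lam‖)) := h1
        _ = B/2 * (‖w1 s‖ + ‖w2 s‖) := by
            have hln0 : ‖lam‖ ≠ 0 := by positivity
            field_simp
    have hexp : Real.exp (-(lam.im * s)) * Real.exp ((lam.im - a) * t)
        ≤ Real.exp (-(a * s)) := by
      rw [← Real.exp_add, Real.exp_le_exp]
      have h2 : (a - lam.im) * s ≤ (a - lam.im) * t :=
        mul_le_mul_of_nonneg_left hs.2 (by linarith)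
      linarith
    calc ‖F2 s‖ * Real.exp ((lam.im - a) * t)
        = (‖c s‖ * ‖Ub s‖)
          * (Real.exp (-(lam.im * s)) * Real.exp ((lam.im - a) * t)) := by
          rw [habsF2]; ring
      _ ≤ (B/2 * (‖w1 s‖ + ‖w2 s‖)) * Real.exp (-(a * s)) := by
          apply mul_le_mul hcu hexp (by positivity) (by positivity)
      _ = B/2 * fs s := by rw [hfsdef]; ring
  have hbranch1 : ∀ t ∈ Set.Icc (0:ℝ) T,
      ‖w1 t‖ * Real.exp (-(a * t)) ≤
        ‖w1 0‖ + ∫ s in (0:ℝ)..t, B/2 * fs s := by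
    intro t ht
    have e0 : ‖g1 t‖ = ‖w1 t‖ * Real.exp (lam.im * t) := by
      rw [hg1def]
      simp only
      rw [norm_mul, hA1]
    have estep : ‖w1 t‖ * Real.exp (-(a * t))
        = ‖g1 t‖ * Real.exp (-((lam.im + a) * t)) := by
      rw [e0, mul_assoc, ← Real.exp_add]
      congr 2
      ring
    have hineq1 : ‖g1 t‖
        ≤ ‖w1 0‖ + ∫ s in (0:ℝ)..t, ‖F1 s‖ := by
      rw [hftc1 t ht]
      refine le_trans (norm_add_le _ _) ?_
      have hg10 : ‖g1 0‖ = ‖w1 0‖ := by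
        rw [hg1def]; simp
      rw [hg10]
      gcongr
      simpa using
        intervalIntegral.norm_integral_le_integral_norm (f := F1) (μ := volume)
          (a := (0:ℝ)) (b := t) ht.1
    have hint1 : IntervalIntegrable
        (fun s => ‖F1 s‖ * Real.exp (-((lam.im + a) * t))) volume 0 t :=
      ((continuous_norm.comp hF1cont).mul continuous_const).intervalIntegrable _ _
    have hint2 : IntervalIntegrable (fun s => B/2 * fs s) volume 0 t :=
      (continuous_const.mul hfscont).intervalIntegrable _ _
    have hmono := intervalIntegral.integral_mono_on ht.1 hint1 hint2 (hptw1 t ht)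
    have hE1 : Real.exp (-((lam.im + a) * t)) ≤ 1 := by
      rw [Real.exp_le_one_iff]
      nlinarith [ht.1]
    calc ‖w1 t‖ * Real.exp (-(a * t))
        = ‖g1 t‖ * Real.exp (-((lam.im + a) * t)) := estep
      _ ≤ (‖w1 0‖ + ∫ s in (0:ℝ)..t, ‖F1 s‖)
            * Real.exp (-((lam.im + a) * t)) :=
          mul_le_mul_of_nonneg_right hineq1 (Real.exp_pos _).le
      _ = ‖w1 0‖ * Real.exp (-((lam.im + a) * t))
          + ∫ s in (0:ℝ)..t, ‖F1 s‖ * Real.exp (-((lam.im + a) * t)) := by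
          rw [add_mul, intervalIntegral.integral_mul_const]
      _ ≤ ‖w1 0‖ * 1 + ∫ s in (0:ℝ)..t, B/2 * fs s := by
          have := mul_le_mul_of_nonneg_left hE1 (norm_nonneg (w1 0))
          linarith
      _ = ‖w1 0‖ + ∫ s in (0:ℝ)..t, B/2 * fs s := by rw [mul_one]
  have hbranch2 : ∀ t ∈ Set.Icc (0:ℝ) T,
      ‖w2 t‖ * Real.exp (-(a * t)) ≤
        ‖w2 0‖ + ∫ s in (0:ℝ)..t, B/2 * fs s := by
    intro t ht
    have e0 : ‖g2 t‖ = ‖w2 t‖ * Real.exp (-(lam.im * t)) := by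
      rw [hg2def]
      simp only
      rw [norm_mul, hA2]
    have estep : ‖w2 t‖ * Real.exp (-(a * t))
        = ‖g2 t‖ * Real.exp ((lam.im - a) * t) := by
      rw [e0, mul_assoc, ← Real.exp_add]
      congr 2
      ring
    have hineq1 : ‖g2 t‖
        ≤ ‖w2 0‖ + ∫ s in (0:ℝ)..t, ‖F2 s‖ := by
      rw [hftc2 t ht]
      refine le_trans (norm_add_le _ _) ?_
      have hg20 : ‖g2 0‖ = ‖w2 0‖ := by
        rw [hg2def]; simp
      rw [hg20]
      gcongr
      simpa using
        intervalIntegral.norm_integral_le_integral_norm (f := F2) (μ := volume)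
          (a := (0:ℝ)) (b := t) ht.1
    have hint1 : IntervalIntegrable
        (fun s => ‖F2 s‖ * Real.exp ((lam.im - a) * t)) volume 0 t :=
      ((continuous_norm.comp hF2cont).mul continuous_const).intervalIntegrable _ _
    have hint2 : IntervalIntegrable (fun s => B/2 * fs s) volume 0 t :=
      (continuous_const.mul hfscont).intervalIntegrable _ _
    have hmono := intervalIntegral.integral_mono_on ht.1 hint1 hint2 (hptw2 t ht)
    have hE1 : Real.exp ((lam.im - a) * t) ≤ 1 := by
      rw [Real.exp_le_one_iff]
      nlinarith [ht.1]
    calc ‖w2 t‖ * Real.exp (-(a * t))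
        = ‖g2 t‖ * Real.exp ((lam.im - a) * t) := estep
      _ ≤ (‖w2 0‖ + ∫ s in (0:ℝ)..t, ‖F2 s‖)
            * Real.exp ((lam.im - a) * t) :=
          mul_le_mul_of_nonneg_right hineq1 (Real.exp_pos _).le
      _ = ‖w2 0‖ * Real.exp ((lam.im - a) * t)
          + ∫ s in (0:ℝ)..t, ‖F2 s‖ * Real.exp ((lam.im - a) * t) := by
          rw [add_mul, intervalIntegral.integral_mul_const]
      _ ≤ ‖w2 0‖ * 1 + ∫ s in (0:ℝ)..t, B/2 * fs s := by
          have := mul_le_mul_of_nonneg_left hE1 (norm_nonneg (w2 0))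
          linarith
      _ = ‖w2 0‖ + ∫ s in (0:ℝ)..t, B/2 * fs s := by rw [mul_one]
  set A0 : ℝ := ‖w1 0‖ + ‖w2 0‖ with hA0def
  have hA0nn : 0 ≤ A0 := add_nonneg (norm_nonneg _) (norm_nonneg _)
  have hmain : ∀ t ∈ Set.Icc (0:ℝ) T, fs t ≤ A0 + B * ∫ s in (0:ℝ)..t, fs s := by
    intro t ht
    have h1 := hbranch1 t ht
    have h2 := hbranch2 t ht
    have hfst : fs t = ‖w1 t‖ * Real.exp (-(a*t))
        + ‖w2 t‖ * Real.exp (-(a*t)) := by rw [hfsdef]; ring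
    have hsum : (∫ s in (0:ℝ)..t, B/2 * fs s) + (∫ s in (0:ℝ)..t, B/2 * fs s)
        = B * ∫ s in (0:ℝ)..t, fs s := by
      rw [intervalIntegral.integral_const_mul]
      ring
    rw [hfst, hA0def]
    have h3 := add_le_add h1 h2
    rw [show (‖w1 0‖ + ∫ s in (0:ℝ)..t, B/2 * fs s)
        + (‖w2 0‖ + ∫ s in (0:ℝ)..t, B/2 * fs s)
        = ‖w1 0‖ + ‖w2 0‖
          + ((∫ s in (0:ℝ)..t, B/2 * fs s) + ∫ s in (0:ℝ)..t, B/2 * fs s) from by ring,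
      hsum] at h3
    exact h3
  have hgron := gronwall_integral hfscont hfsnn hT.le hA0nn hB.le hmain
  have hA0b : A0 ≤ 4 * ‖lam‖ := by
    have h1 : w1 0 = (hh:ℂ) + Complex.I * lam := by
      rw [hw1def]; simp only; rw [hVb0, hUb0]; ring
    have h2 : w2 0 = (hh:ℂ) - Complex.I * lam := by
      rw [hw2def]; simp only; rw [hVb0, hUb0]; ring
    have h3 : ‖w1 0‖ ≤ |hh| + ‖lam‖ := by
      rw [h1]
      refine le_trans (norm_add_le _ _) ?_
      rw [Complex.norm_real, Real.norm_eq_abs, norm_mul, Complex.norm_I, one_mul]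
    have h4 : ‖w2 0‖ ≤ |hh| + ‖lam‖ := by
      rw [h2]
      have h4' : ‖(hh : ℂ) - Complex.I * lam‖
          ≤ ‖(hh : ℂ)‖ + ‖Complex.I * lam‖ := by
        simpa using norm_sub_le (E := ℂ) (hh : ℂ) (Complex.I * lam)
      refine le_trans h4' ?_
      rw [Complex.norm_real, Real.norm_eq_abs, norm_mul, Complex.norm_I, one_mul]
    calc A0 = ‖w1 0‖ + ‖w2 0‖ := hA0def
      _ ≤ (|hh| + ‖lam‖) + (|hh| + ‖lam‖) := add_le_add h3 h4
      _ ≤ 4 * ‖lam‖ := by linarith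
  -- conclusion
  intro x hx
  have hexp1BT : (1:ℝ) ≤ Real.exp (B * T) := Real.one_le_exp (by positivity)
  rcases eq_or_lt_of_le hx.1 with hx0 | hx0
  · -- x = 0
    rw [← hx0]
    constructor
    · rw [hy0]
      rw [Real.zero_rpow hα0.ne']
      simp only [zero_div, mul_zero, Real.exp_zero, mul_one, norm_one]
      linarith
    · rw [Real.zero_rpow hα0.ne']
      simp only [zero_div, mul_zero, Real.exp_zero, mul_one]
      rcases lt_or_eq_of_le hα1 with hα | hα
      · have hz : ((0:ℝ) ^ (1 - α)) = 0 := Real.zero_rpow (by linarith)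
        rw [cfDeriv, hz]
        simp only [Complex.ofReal_zero, zero_mul, norm_zero]
        positivity
      · -- α = 1
        subst hα
        by_cases hdy : DifferentiableAt ℝ y 0
        · have hXid : ∀ s : ℝ, X s = s := by
            intro s
            rw [hXdef]
            simp
          have hUbId : ∀ s ∈ Set.Icc (0:ℝ) T, Ub s = y s := by
            intro s hs
            rw [hUbeq s hs, hXid]
          have hP : HasDerivAt (fun u => ∫ s in (0:ℝ)..u, Vb s) (Vb 0) 0 :=
            intervalIntegral.integral_hasDerivAt_right (hVbcont.intervalIntegrable _ _)
              (hVbcont.stronglyMeasurableAtFilter _ _) hVbcont.continuousAt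
          have hUbint : ∀ s ∈ Set.Icc (0:ℝ) T, Ub s = Ub 0 + ∫ u in (0:ℝ)..s, Vb u := by
            intro s hs
            have := intervalIntegral.integral_eq_sub_of_hasDeriv_right_of_le hs.1
              hUbcont.continuousOn
              (fun u hu => (hU' u ⟨hu.1, lt_of_lt_of_le hu.2 hs.2⟩).hasDerivWithinAt)
              (hVbcont.intervalIntegrable _ _)
            rw [this]; ring
          have h0T : (0:ℝ) ∈ Set.Icc (0:ℝ) T := ⟨le_refl 0, hT.le⟩
          have hd1 : HasDerivWithinAt Ub ((hh:ℂ)) (Set.Icc (0:ℝ) T) 0 := by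
            have h5 : HasDerivWithinAt (fun u => Ub 0 + ∫ s in (0:ℝ)..u, Vb s) (Vb 0)
                (Set.Icc (0:ℝ) T) 0 := ((hP.const_add (Ub 0))).hasDerivWithinAt
            have h6 := h5.congr (fun u hu => hUbint u hu) (hUbint 0 h0T)
            rwa [hVb0] at h6
          have hd2 : HasDerivWithinAt Ub (deriv y 0) (Set.Icc (0:ℝ) T) 0 := by
            have h5 : HasDerivWithinAt y (deriv y 0) (Set.Icc (0:ℝ) T) 0 :=
              hdy.hasDerivAt.hasDerivWithinAt
            exact h5.congr (fun u hu => hUbId u hu) (hUbId 0 h0T)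
          have huniq : UniqueDiffWithinAt ℝ (Set.Icc (0:ℝ) T) 0 := (uniqueDiffOn_Icc hT) 0 h0T
          have heq := huniq.eq hd2.hasFDerivWithinAt hd1.hasFDerivWithinAt
          have heq1 : deriv y 0 = (hh:ℂ) := by
            have := congrArg (fun L : ℝ →L[ℝ] ℂ => L 1) heq
            simpa using this
          rw [cfDeriv, heq1]
          rw [sub_self, Real.rpow_zero]
          simp only [Complex.ofReal_one, one_mul, Complex.norm_real, Real.norm_eq_abs]
          calc |hh| ≤ ‖lam‖ := hlamh
            _ = 1 * ‖lam‖ := (one_mul _).symm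
            _ ≤ 2 * Real.exp (B * T) * ‖lam‖ := by
                apply mul_le_mul_of_nonneg_right _ (norm_nonneg _)
                nlinarith
        · rw [cfDeriv, deriv_zero_of_not_differentiableAt hdy]
          simp only [mul_zero, norm_zero]
          positivity
  · -- 0 < x
    have hxa : 0 < x ^ α := Real.rpow_pos_of_pos hx0 α
    set t : ℝ := x ^ α / α with htdef
    have ht0 : 0 < t := by positivity
    have htT : t ≤ T := by
      have h7 : x ^ α ≤ Real.pi ^ α := Real.rpow_le_rpow hx.1 hx.2 hα0.le
      rw [htdef, hTdef]
      exact (div_le_div_iff_of_pos_right hα0).2 h7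
    have hXtx : X t = x := hXinv x hx.1
    have hUbt : Ub t = y x := by rw [hUbeq t ⟨ht0.le, htT⟩, hXtx]
    have hVbt : Vb t = cfDeriv α y x := by rw [hVbeq t ⟨ht0, htT⟩, hXtx]
    have hfsle : fs t ≤ 4 * ‖lam‖ * Real.exp (B * T) := by
      calc fs t ≤ A0 * Real.exp (B * t) := hgron t ⟨ht0.le, htT⟩
        _ ≤ (4 * ‖lam‖) * Real.exp (B * T) := by
            apply mul_le_mul hA0b (Real.exp_le_exp.2 (by nlinarith)) (Real.exp_pos _).le
              (by positivity)
    have hsumw : ‖w1 t‖ + ‖w2 t‖ = fs t * Real.exp (a * t) := by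
      rw [hfsdef]
      simp only
      rw [mul_assoc, ← Real.exp_add]
      simp
    have hexpeq : Real.exp (a * t) = Real.exp (|lam.im| * x ^ α / α) := by
      rw [hadef, htdef]
      congr 1
      ring
    constructor
    · have h6 := hUbb t
      rw [hUbt] at h6
      calc ‖y x‖
          ≤ (‖w1 t‖ + ‖w2 t‖) / (2 * ‖lam‖) := h6
        _ = fs t * Real.exp (a*t) / (2 * ‖lam‖) := by rw [hsumw]
        _ ≤ (4 * ‖lam‖ * Real.exp (B*T)) * Real.exp (a*t)
              / (2 * ‖lam‖) := by gcongr
        _ = 2 * Real.exp (B*T) * Real.exp (a*t) := by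
            have hln0 : ‖lam‖ ≠ 0 := by positivity
            field_simp
            ring
        _ = 2 * Real.exp (B*T) * Real.exp (|lam.im| * x ^ α / α) := by rw [hexpeq]
    · have h6 := hVbb t
      rw [hVbt] at h6
      calc ‖cfDeriv α y x‖
          ≤ (‖w1 t‖ + ‖w2 t‖) / 2 := h6
        _ = fs t * Real.exp (a*t) / 2 := by rw [hsumw]
        _ ≤ (4 * ‖lam‖ * Real.exp (B*T)) * Real.exp (a*t) / 2 := by gcongr
        _ = 2 * Real.exp (B*T) * ‖lam‖ * Real.exp (a*t) := by ring
        _ = 2 * Real.exp (B*T) * ‖lam‖ * Real.exp (|lam.im| * x ^ α / α) := by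
            rw [hexpeq]

/-- There are `C > 0`, `r > 0` such that for all `λ = σ + iτ` with
`|λ| ≥ r` and all `x ∈ [0,π]`:
`|φ(x,λ)| ≤ C exp(|τ| x^α/α)` and `|D^α φ(x,λ)| ≤ C |λ| exp(|τ| x^α/α)`. -/
theorem phi_basic_estimates (α : ℝ) (hα0 : 0 < α) (hα1 : α ≤ 1)
    (h : ℝ) (p q : ℝ → ℝ)
    (hp : MemW2 α p) (hp' : MemW2 α (cfDerivR α p)) (hq : MemW2 α q)
    (phi : ℂ → ℝ → ℂ) (hphi : ∀ lam : ℂ, IsPhi α h p q lam (phi lam)) :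
    ∃ C > (0:ℝ), ∃ r > (0:ℝ), ∀ lam : ℂ, r ≤ ‖lam‖ →
      ∀ x ∈ Set.Icc (0:ℝ) Real.pi,
        ‖phi lam x‖ ≤ C * Real.exp (|lam.im| * x ^ α / α) ∧
        ‖cfDeriv α (phi lam) x‖
          ≤ C * ‖lam‖ * Real.exp (|lam.im| * x ^ α / α) := by
  obtain ⟨Np, hNp0, hpb⟩ := bound_of_continuousOn hp.1.continuousOn
  obtain ⟨Nq, hNq0, hqb⟩ := bound_of_continuousOn hq.1.continuousOn
  refine ⟨2 * Real.exp ((2*Np+Nq+1) * (Real.pi ^ α / α)), by positivity, 1 + |h|,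
    by positivity, ?_⟩
  intro lam hlam x hx
  exact key α h Np Nq hα0 hα1 p q hp.1.continuousOn hq.1.continuousOn hpb hqb lam hlam
    (phi lam) (hphi lam) x hx

end
end
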